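/- arXiv:1910.03918 — 12 statements merged into one kernel-verified Lean document; each statement's English description precedes it below -/
import Mathlib

section
/- Let γ, ε ∈ (0,1), let K ≥ 1 be an integer, and let μ : ℕ → ℝ be nonnegative with μ^C := Σ_{k=0}^{K-1} μ_k ≤ 1. Suppose the steady-state balance equations hold: (1 - γ·(1-ε)·μ^C)·μ_0 = 1 - γ, and (1 - γ·(1-ε)·μ^C)·μ_k = γ·(1-(1-ε)·μ^C)·μ_{k-1} for every 0 < k < K. Then, writing β = β(γ,ε,μ^C), one has μ_k = β^k·(1-β) for every k < K, and consequently μ^C = 1 - β^K. -/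
noncomputable def betaFn (γ ε μ : ℝ) : ℝ := γ * (1 - (1 - ε) * μ) / (1 - γ * (1 - ε) * μ)

theorem stmt_0 (γ ε : ℝ) (hγ : γ ∈ Set.Ioo (0:ℝ) 1) (hε : ε ∈ Set.Ioo (0:ℝ) 1)
    (K : ℕ) (hK : 1 ≤ K) (μ : ℕ → ℝ) (hμ : ∀ k, 0 ≤ μ k)
    (μC : ℝ) (hμC : μC = ∑ k ∈ Finset.range K, μ k) (hle : μC ≤ 1)
    (h0 : (1 - γ * (1 - ε) * μC) * μ 0 = 1 - γ)
    (hk : ∀ k, 0 < k → k < K →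
      (1 - γ * (1 - ε) * μC) * μ k = γ * (1 - (1 - ε) * μC) * μ (k - 1)) :
    (∀ k < K, μ k = (betaFn γ ε μC) ^ k * (1 - betaFn γ ε μC)) ∧
      μC = 1 - (betaFn γ ε μC) ^ K := by
  obtain ⟨hγ0, hγ1⟩ := hγ
  obtain ⟨hε0, hε1⟩ := hε
  have hμC0 : 0 ≤ μC := by
    rw [hμC]; exact Finset.sum_nonneg fun i _ => hμ i
  have hD : 0 < 1 - γ * (1 - ε) * μC := by
    nlinarith [mul_nonneg (mul_nonneg hγ0.le (by linarith : (0:ℝ) ≤ 1 - ε)) (by linarith : (0:ℝ) ≤ 1 - μC), mul_nonneg (mul_nonneg hγ0.le hε0.le) hμC0, mul_pos hγ0 hε0]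
  set β := betaFn γ ε μC with hβ
  have hβD : β * (1 - γ * (1 - ε) * μC) = γ * (1 - (1 - ε) * μC) := by
    rw [hβ, betaFn]; field_simp
  have h1β : 1 - β = (1 - γ) / (1 - γ * (1 - ε) * μC) := by
    rw [hβ, betaFn]; field_simp; ring
  have hmain : ∀ k, k < K → μ k = β ^ k * (1 - β) := by
    intro k
    induction k with
    | zero =>
      intro _
      rw [pow_zero, one_mul, h1β, eq_div_iff hD.ne']
      linarith [h0]
    | succ n ih =>
      intro hn
      have hn' : n < K := Nat.lt_of_succ_lt hn
      have heq := hk (n + 1) (Nat.succ_pos n) hn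
      simp only [Nat.add_sub_cancel] at heq
      have : (1 - γ * (1 - ε) * μC) * μ (n + 1)
          = (1 - γ * (1 - ε) * μC) * (β * μ n) := by
        rw [heq, ← hβD]; ring
      have h2 : μ (n + 1) = β * μ n := by
        exact mul_left_cancel₀ hD.ne' this
      rw [h2, ih hn', pow_succ]; ring
  refine ⟨hmain, ?_⟩
  have : μC = ∑ k ∈ Finset.range K, β ^ k * (1 - β) := by
    rw [hμC]
    exact Finset.sum_congr rfl fun i hi => hmain i (Finset.mem_range.mp hi)
  rw [this, ← Finset.sum_mul]
  have hg := geom_sum_mul β K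
  nlinarith [hg]
end

section
/- For every γ, ε ∈ (0,1) and every integer K ≥ 1, there exists μ ∈ (0,1) such that μ = 1 - β(γ,ε,μ)^K. (That is, every GrimK strategy with K ≥ 1 admits at least one steady-state cooperator share in (0,1).) -/
theorem stmt_1 (γ ε : ℝ) (hγ : γ ∈ Set.Ioo (0:ℝ) 1) (hε : ε ∈ Set.Ioo (0:ℝ) 1)
    (K : ℕ) (hK : 1 ≤ K) :
    ∃ μ ∈ Set.Ioo (0:ℝ) 1, μ = 1 - (betaFn γ ε μ) ^ K := by
  obtain ⟨hγ0, hγ1⟩ := hγ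
  obtain ⟨hε0, hε1⟩ := hε
  set g : ℝ → ℝ := fun μ => 1 - (betaFn γ ε μ) ^ K - μ with hg
  have hden : ∀ μ ∈ Set.Icc (0:ℝ) 1, 1 - γ * (1 - ε) * μ ≠ 0 := by
    intro μ hμ
    have h1 : γ * (1 - ε) * μ < 1 := by nlinarith [hμ.1, hμ.2, mul_pos hγ0 hε0, mul_nonneg (mul_nonneg hγ0.le (by linarith : (0:ℝ) ≤ 1-ε)) hμ.1]
    linarith
  have hcont : ContinuousOn g (Set.Icc 0 1) := by
    apply ContinuousOn.sub
    apply ContinuousOn.sub continuousOn_const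
    apply ContinuousOn.pow
    exact ContinuousOn.div (by fun_prop) (by fun_prop) hden
    exact continuousOn_id
  have hβ0 : betaFn γ ε 0 = γ := by simp [betaFn]
  have hg0 : 0 < g 0 := by
    have : γ ^ K < 1 := pow_lt_one₀ (le_of_lt hγ0) hγ1 (by omega)
    simp [hg, hβ0]
    linarith
  have hg1 : g 1 < 0 := by
    have hd : 0 < 1 - γ * (1 - ε) * 1 := by nlinarith
    have hb : 0 < betaFn γ ε 1 := by
      apply div_pos _ hd
      nlinarith
    have : 0 < betaFn γ ε 1 ^ K := pow_pos hb K
    simp [hg]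
    linarith
  have hmem : (0:ℝ) ∈ Set.Icc (g 1) (g 0) := ⟨le_of_lt hg1, le_of_lt hg0⟩
  obtain ⟨c, hc, hgc⟩ := intermediate_value_Icc' (by norm_num : (0:ℝ) ≤ 1) hcont hmem
  refine ⟨c, ⟨?_, ?_⟩, by simp [hg] at hgc; linarith⟩
  · rcases lt_or_eq_of_le hc.1 with h | h
    · exact h
    · exfalso; rw [← h] at hgc; linarith
  · rcases lt_or_eq_of_le hc.2 with h | h
    · exact h
    · exfalso; rw [h] at hgc; linarith
end

section
/- Let γ, ε, μ ∈ (0,1), let K ≥ 1 be an integer, and let V : ℕ → ℝ satisfy V_k = 0 for all k ≥ K and V_k = (1-γ)·μ + γ·(1-ε)·μ·V_k + γ·(1-(1-ε)·μ)·V_{k+1} for all k < K. Then V_k = (1 - β(γ,ε,μ)^{K-k})·μ for every k < K. -/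
theorem stmt_3 (γ ε μ : ℝ) (hγ : γ ∈ Set.Ioo (0:ℝ) 1) (hε : ε ∈ Set.Ioo (0:ℝ) 1)
    (hμ : μ ∈ Set.Ioo (0:ℝ) 1) (K : ℕ) (hK : 1 ≤ K) (V : ℕ → ℝ)
    (hV0 : ∀ k, K ≤ k → V k = 0)
    (hVrec : ∀ k < K, V k = (1 - γ) * μ + γ * (1 - ε) * μ * V k
      + γ * (1 - (1 - ε) * μ) * V (k + 1)) :
    ∀ k < K, V k = (1 - (betaFn γ ε μ) ^ (K - k)) * μ := by
  obtain ⟨hγ0, hγ1⟩ := hγ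
  obtain ⟨hε0, hε1⟩ := hε
  obtain ⟨hμ0, hμ1⟩ := hμ
  have hD : 0 < 1 - γ * (1 - ε) * μ := by nlinarith [mul_pos (mul_pos hγ0 hε0) hμ0, mul_pos hγ0 hμ0]
  have hDne : (1 - γ * (1 - ε) * μ) ≠ 0 := ne_of_gt hD
  have hbD : betaFn γ ε μ * (1 - γ * (1 - ε) * μ) = γ * (1 - (1 - ε) * μ) := by
    unfold betaFn; field_simp
  have key : ∀ n k, K - k = n → k ≤ K → V k = (1 - betaFn γ ε μ ^ (K - k)) * μ := by
    intro n
    induction n with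
    | zero =>
      intro k hk hkK
      rw [hk, pow_zero, hV0 k (by omega)]
      ring
    | succ n ih =>
      intro k hk hkK
      have hkK' : k < K := by omega
      have hnext := ih (k + 1) (by omega) (by omega)
      have hrec := hVrec k hkK'
      have hK1 : K - (k + 1) = n := by omega
      rw [hnext, hK1] at hrec
      rw [hk]
      have h1 : V k * (1 - γ * (1 - ε) * μ)
          = (1 - betaFn γ ε μ ^ (n + 1)) * μ * (1 - γ * (1 - ε) * μ) := by
        rw [pow_succ']
        linear_combination hrec + hbD * (betaFn γ ε μ ^ n * μ)
      exact mul_right_cancel₀ hDne h1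
  intro k hk
  exact key (K - k) k rfl (le_of_lt hk)
end

section
/- Let γ, ε, μ ∈ (0,1), let K ≥ 1 be an integer, and let V : ℕ → ℝ satisfy V_k = 0 for all k ≥ K and V_k = (1-γ)·μ + γ·(1-ε)·μ·V_k + γ·(1-(1-ε)·μ)·V_{k+1} for all k < K. If in addition μ = 1 - β(γ,ε,μ)^K, then (1-ε)·(γ/(1-γ))·(V_0 - V_1) = ((1-ε)·(1-μ)/(1-(1-ε)·μ))·μ. -/
theorem stmt_4 (γ ε μ : ℝ) (hγ : γ ∈ Set.Ioo (0:ℝ) 1) (hε : ε ∈ Set.Ioo (0:ℝ) 1)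
    (hμ : μ ∈ Set.Ioo (0:ℝ) 1) (K : ℕ) (hK : 1 ≤ K) (V : ℕ → ℝ)
    (hV0 : ∀ k, K ≤ k → V k = 0)
    (hVrec : ∀ k < K, V k = (1 - γ) * μ + γ * (1 - ε) * μ * V k
      + γ * (1 - (1 - ε) * μ) * V (k + 1))
    (hfeas : μ = 1 - (betaFn γ ε μ) ^ K) :
    (1 - ε) * (γ / (1 - γ)) * (V 0 - V 1)
      = ((1 - ε) * (1 - μ) / (1 - (1 - ε) * μ)) * μ := by
  obtain ⟨hγ0, hγ1⟩ := hγ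
  obtain ⟨hε0, hε1⟩ := hε
  obtain ⟨hμ0, hμ1⟩ := hμ
  have he1 : (1 - ε) * μ < 1 := by nlinarith
  have he0 : 0 < (1 - ε) * μ := by nlinarith
  have hd : (0:ℝ) < 1 - γ * ((1 - ε) * μ) := by nlinarith
  have hd' : (1:ℝ) - γ * (1 - ε) * μ ≠ 0 := by intro h; rw [mul_assoc] at h; linarith
  have hg1 : (1:ℝ) - γ ≠ 0 := by linarith
  have hem : (1:ℝ) - (1 - ε) * μ ≠ 0 := by linarith
  set β := betaFn γ ε μ with hβdef
  set c := (1 - γ) * μ / (1 - γ * ((1 - ε) * μ)) with hcdef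
  have hrec : ∀ k < K, V k = c + β * V (k + 1) := by
    intro k hk
    have h := hVrec k hk
    have key : V k * (1 - γ * ((1 - ε) * μ))
        = (1 - γ) * μ + γ * (1 - (1 - ε) * μ) * V (k + 1) := by linear_combination h
    have hform2 : c + β * V (k + 1)
        = ((1 - γ) * μ + γ * (1 - (1 - ε) * μ) * V (k + 1)) / (1 - γ * ((1 - ε) * μ)) := by
      rw [hcdef, hβdef]; unfold betaFn
      field_simp
    rw [hform2, eq_div_iff hd.ne']
    exact key
  have hform : ∀ j ≤ K, V (K - j) = c * ∑ i ∈ Finset.range j, β ^ i := by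
    intro j
    induction j with
    | zero => intro _; simp [hV0 K le_rfl]
    | succ n ih =>
      intro hn
      have hn' : n ≤ K := le_of_lt hn
      have hlt : K - (n + 1) < K := by omega
      have hs : K - (n + 1) + 1 = K - n := by omega
      rw [hrec _ hlt, hs, ih hn', geom_sum_succ]
      ring
  have hV0eq : V 0 = c * ∑ i ∈ Finset.range K, β ^ i := by
    have := hform K le_rfl
    simpa using this
  have hV1eq : V 1 = c * ∑ i ∈ Finset.range (K - 1), β ^ i := by
    have := hform (K - 1) (Nat.sub_le _ _)
    have h1 : K - (K - 1) = 1 := by omega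
    rwa [h1] at this
  have hsplit : ∑ i ∈ Finset.range K, β ^ i
      = (∑ i ∈ Finset.range (K - 1), β ^ i) + β ^ (K - 1) := by
    conv_lhs => rw [show K = (K - 1) + 1 from by omega]
    rw [Finset.sum_range_succ]
  have hdiff : V 0 - V 1 = c * β ^ (K - 1) := by
    rw [hV0eq, hV1eq, hsplit]; ring
  have hβK : β * β ^ (K - 1) = 1 - μ := by
    rw [← pow_succ', show K - 1 + 1 = K from by omega]
    linarith [hfeas]
  have hβmul : γ * (1 - (1 - ε) * μ) = β * (1 - γ * (1 - ε) * μ) := by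
    rw [hβdef]; unfold betaFn; rw [div_mul_cancel₀ _ hd']
  have hx : γ * (1 - (1 - ε) * μ) * β ^ (K - 1)
      = (1 - μ) * (1 - γ * (1 - ε) * μ) := by
    rw [hβmul]
    linear_combination (1 - γ * (1 - ε) * μ) * hβK
  rw [hdiff, hcdef]
  field_simp
  rw [div_eq_iff (by intro h; apply hd'; linear_combination h)]
  linear_combination hx
end

section
/- Let γ, ε, μ ∈ (0,1) and l > 0, and set V = (1-γ)·μ/(1-γ·(1-ε)·μ). If (1-γ)·(-l) + γ·(1-ε)·V < 0, then γ·(1-ε)·μ < l/(1+l). (This is the record-(K-1) player's incentive argument: in any GrimK equilibrium with cooperator share μ^C, one must have γ·(1-ε)·μ^C < l/(1+l).) -/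
theorem stmt_7 (γ ε μ l : ℝ) (hγ : γ ∈ Set.Ioo (0:ℝ) 1) (hε : ε ∈ Set.Ioo (0:ℝ) 1)
    (hμ : μ ∈ Set.Ioo (0:ℝ) 1) (hl : 0 < l)
    (V : ℝ) (hV : V = (1 - γ) * μ / (1 - γ * (1 - ε) * μ))
    (h : (1 - γ) * (-l) + γ * (1 - ε) * V < 0) :
    γ * (1 - ε) * μ < l / (1 + l) := by
  obtain ⟨hγ0, hγ1⟩ := hγ
  obtain ⟨hε0, hε1⟩ := hε
  obtain ⟨hμ0, hμ1⟩ := hμ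
  have hx1 : γ * (1 - ε) * μ < 1 := by nlinarith [mul_pos (sub_pos.2 hγ1) (sub_pos.2 hμ1), mul_pos (mul_pos hγ0 hε0) hμ0]
  have hden : 0 < 1 - γ * (1 - ε) * μ := by linarith
  subst hV
  rw [lt_div_iff₀ (by linarith : (0:ℝ) < 1 + l)]
  have h2 : ((1 - γ) * (-l) + γ * (1 - ε) * ((1 - γ) * μ / (1 - γ * (1 - ε) * μ))) * (1 - γ * (1 - ε) * μ) < 0 :=
    mul_neg_of_neg_of_pos h hden
  have h3 : (1 - γ) * (-l) * (1 - γ * (1 - ε) * μ) + γ * (1 - ε) * ((1 - γ) * μ) < 0 := by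
    have := div_mul_cancel₀ ((1 - γ) * μ) hden.ne'
    nlinarith [h2]
  nlinarith [h3]
end

section
/- Let γ, ε ∈ (0,1), g, l > 0, and μ ∈ (0,1). If μ satisfies both the cooperation constraint (ICC), ((1-ε)·(1-μ)/(1-(1-ε)·μ))·μ > g, and the defection constraint (ICD), μ < (1/(γ·(1-ε)))·(l/(1+l)), then γ·(1-ε)·g < l/(1+l). In particular, (ICC) alone implies g < μ. -/
theorem stmt_8 (γ ε g l μ : ℝ) (hγ : γ ∈ Set.Ioo (0:ℝ) 1) (hε : ε ∈ Set.Ioo (0:ℝ) 1)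
    (hg : 0 < g) (hl : 0 < l) (hμ : μ ∈ Set.Ioo (0:ℝ) 1) :
    ((((1 - ε) * (1 - μ) / (1 - (1 - ε) * μ)) * μ > g ∧
        μ < (1 / (γ * (1 - ε))) * (l / (1 + l))) →
      γ * (1 - ε) * g < l / (1 + l)) ∧
    ((((1 - ε) * (1 - μ) / (1 - (1 - ε) * μ)) * μ > g) → g < μ) := by
  obtain ⟨hγ0, hγ1⟩ := hγ
  obtain ⟨hε0, hε1⟩ := hε
  obtain ⟨hμ0, hμ1⟩ := hμ
  have hk0 : (0:ℝ) < 1 - ε := by linarith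
  have hden : (0:ℝ) < 1 - (1 - ε) * μ := by nlinarith
  have hgmu : (((1 - ε) * (1 - μ) / (1 - (1 - ε) * μ)) * μ > g) → g < μ := by
    intro h
    have hratio : (1 - ε) * (1 - μ) / (1 - (1 - ε) * μ) < 1 := by
      rw [div_lt_one hden]; nlinarith
    nlinarith [mul_lt_of_lt_one_left hμ0 hratio]
  refine ⟨?_, hgmu⟩
  rintro ⟨h1, h2⟩
  have hgk : 0 < γ * (1 - ε) := by positivity
  have h3 : g < μ := hgmu h1
  have h4 : γ * (1 - ε) * μ < l / (1 + l) := by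
    have := (lt_div_iff₀ hgk).mp (by rw [div_mul_eq_mul_div, one_mul] at h2; exact h2)
    linarith [this]
  nlinarith
end

section
/- Let g, l > 0 with g > l/(1+l). Then there exist γ̄ ∈ (0,1) and ε̄ ∈ (0,1) such that for every γ ∈ (γ̄, 1) and every ε ∈ (0, ε̄), no μ ∈ (0,1) satisfies both the cooperation constraint (ICC) and the defection constraint (ICD). (Hence when g > l/(1+l), no GrimK equilibrium with a positive share of cooperators exists for survival probability near 1 and noise near 0, and the maximal equilibrium cooperator share converges to 0 in the double limit (γ,ε) → (1,0).) -/
theorem stmt_9 (g l : ℝ) (hg : 0 < g) (hl : 0 < l) (hgl : g > l / (1 + l)) :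
    ∃ γbar ∈ Set.Ioo (0:ℝ) 1, ∃ εbar ∈ Set.Ioo (0:ℝ) 1,
      ∀ γ ∈ Set.Ioo γbar 1, ∀ ε ∈ Set.Ioo (0:ℝ) εbar,
        ¬ ∃ μ ∈ Set.Ioo (0:ℝ) 1,
          (((1 - ε) * (1 - μ) / (1 - (1 - ε) * μ)) * μ > g ∧
            μ < (1 / (γ * (1 - ε))) * (l / (1 + l))) := by
  have hl1 : (0:ℝ) < 1 + l := by linarith
  set L : ℝ := l / (1 + l) with hL
  have hLpos : 0 < L := div_pos hl hl1
  set c : ℝ := L / g with hc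
  have hcpos : 0 < c := div_pos hLpos hg
  have hc1 : c < 1 := (div_lt_one hg).mpr hgl
  refine ⟨(1 + c) / 2, ⟨by linarith, by linarith⟩,
    (1 - c) / (1 + c), ⟨div_pos (by linarith) (by linarith), by
      rw [div_lt_one (by linarith)]; linarith⟩, ?_⟩
  rintro γ ⟨hγl, hγu⟩ ε ⟨hεl, hεu⟩ ⟨μ, ⟨hμ0, hμ1⟩, h1, h2⟩
  -- key: γ * (1 - ε) > c
  have h1ε : 1 - ε > 2 * c / (1 + c) := by
    rw [gt_iff_lt, div_lt_iff₀ (by linarith)]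
    have : ε < (1 - c) / (1 + c) := hεu
    rw [lt_div_iff₀ (by linarith)] at this
    nlinarith
  have hγε : γ * (1 - ε) > c := by
    have h2c : 0 < 2 * c / (1 + c) := by positivity
    calc c = (1 + c) / 2 * (2 * c / (1 + c)) := by field_simp
    _ < γ * (1 - ε) := by
        apply mul_lt_mul' (le_of_lt hγl) h1ε (le_of_lt h2c) (by linarith)
  -- ICD gives μ < g
  have hγεpos : 0 < γ * (1 - ε) := lt_trans hcpos hγε
  have hμg : μ < g := by
    have : μ < L / (γ * (1 - ε)) := by
      rw [div_eq_mul_inv]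
      rw [one_div, mul_comm] at h2
      exact h2
    have hLc : L / (γ * (1 - ε)) < g := by
      rw [div_lt_iff₀ hγεpos]
      have : c * g < γ * (1 - ε) * g := by nlinarith
      rw [hc, div_mul_cancel₀ _ (ne_of_gt hg)] at this
      linarith
    linarith
  -- ICC gives μ > g
  have hden : 0 < 1 - (1 - ε) * μ := by nlinarith
  have hfac : (1 - ε) * (1 - μ) / (1 - (1 - ε) * μ) ≤ 1 := by
    rw [div_le_one hden]; nlinarith
  have : (1 - ε) * (1 - μ) / (1 - (1 - ε) * μ) * μ ≤ μ := by
    nlinarith [div_nonneg (by nlinarith : (0:ℝ) ≤ (1 - ε) * (1 - μ)) hden.le]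
  linarith
end

section
/- Let g, l > 0 with g < l/(1+l). For γ, ε ∈ (0,1), define S(γ,ε) = {μ ∈ (0,1) : there exists K ∈ ℕ with μ = 1 - β(γ,ε,μ)^K, and μ satisfies both (ICC) and (ICD)}, and let μ̄(γ,ε) be the supremum of S(γ,ε) ∪ {0}. Then for every δ > 0 there exist γ̄ ∈ (0,1) and ε̄ ∈ (0,1) such that for every γ ∈ (γ̄, 1) and every ε ∈ (0, ε̄), |μ̄(γ,ε) - l/(1+l)| < δ. (That is, the maximal share of cooperators attainable in a GrimK equilibrium converges to l/(1+l) in the double limit (γ,ε) → (1,0).) -/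
open Real Set

lemma denom_pos {γ ε μ : ℝ} (hγ0 : 0 < γ) (hγ1 : γ < 1) (hε0 : 0 < ε) (hε1 : ε < 1)
    (hμ0 : 0 ≤ μ) (hμ1 : μ < 1) : 0 < 1 - γ * (1 - ε) * μ := by
  have h1 : γ * (1 - ε) < 1 := by nlinarith
  have h2 : γ * (1 - ε) * μ ≤ μ := mul_le_of_le_one_left hμ0 h1.le
  linarith

lemma beta_pos {γ ε μ : ℝ} (hγ0 : 0 < γ) (hγ1 : γ < 1) (hε0 : 0 < ε) (hε1 : ε < 1)
    (hμ0 : 0 ≤ μ) (hμ1 : μ < 1) : 0 < betaFn γ ε μ := by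
  apply div_pos _ (denom_pos hγ0 hγ1 hε0 hε1 hμ0 hμ1)
  have h2 : (1 - ε) * μ ≤ μ := mul_le_of_le_one_left hμ0 (by linarith)
  have : 0 < 1 - (1 - ε) * μ := by linarith
  positivity

lemma beta_lt_one {γ ε μ : ℝ} (hγ0 : 0 < γ) (hγ1 : γ < 1) (hε0 : 0 < ε) (hε1 : ε < 1)
    (hμ0 : 0 ≤ μ) (hμ1 : μ < 1) : betaFn γ ε μ < 1 := by
  rw [betaFn, div_lt_one (denom_pos hγ0 hγ1 hε0 hε1 hμ0 hμ1)]
  nlinarith [mul_nonneg hε0.le hμ0]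

lemma one_sub_beta {γ ε μ : ℝ} (hd : 1 - γ * (1 - ε) * μ ≠ 0) :
    1 - betaFn γ ε μ = (1 - γ) / (1 - γ * (1 - ε) * μ) := by
  rw [betaFn]; field_simp; ring

noncomputable def Kfn (γ ε μ : ℝ) : ℝ := Real.log (1 - μ) / Real.log (betaFn γ ε μ)

lemma logbeta_neg {γ ε μ : ℝ} (hγ0 : 0 < γ) (hγ1 : γ < 1) (hε0 : 0 < ε) (hε1 : ε < 1)
    (hμ0 : 0 ≤ μ) (hμ1 : μ < 1) : Real.log (betaFn γ ε μ) < 0 :=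
  Real.log_neg (beta_pos hγ0 hγ1 hε0 hε1 hμ0 hμ1) (beta_lt_one hγ0 hγ1 hε0 hε1 hμ0 hμ1)

lemma Kfn_pos {γ ε μ : ℝ} (hγ0 : 0 < γ) (hγ1 : γ < 1) (hε0 : 0 < ε) (hε1 : ε < 1)
    (hμ0 : 0 < μ) (hμ1 : μ < 1) : 0 < Kfn γ ε μ := by
  have h1 : Real.log (1 - μ) < 0 := Real.log_neg (by linarith) (by linarith)
  have h2 := logbeta_neg hγ0 hγ1 hε0 hε1 hμ0.le hμ1
  exact div_pos_of_neg_of_neg h1 h2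

-- Kfn γ ε μ ≤ (-log(1-μ)) * (1 - γ(1-ε)μ) / (1-γ)
lemma Kfn_le {γ ε μ : ℝ} (hγ0 : 0 < γ) (hγ1 : γ < 1) (hε0 : 0 < ε) (hε1 : ε < 1)
    (hμ0 : 0 < μ) (hμ1 : μ < 1) :
    Kfn γ ε μ ≤ (-Real.log (1 - μ)) * (1 - γ * (1 - ε) * μ) / (1 - γ) := by
  have hD := denom_pos hγ0 hγ1 hε0 hε1 hμ0.le hμ1
  have hB := beta_pos hγ0 hγ1 hε0 hε1 hμ0.le hμ1
  have hL : 0 < -Real.log (1 - μ) := by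
    have := Real.log_neg (show (0:ℝ) < 1 - μ by linarith) (by linarith); linarith
  have hlog : Real.log (betaFn γ ε μ) ≤ betaFn γ ε μ - 1 := Real.log_le_sub_one_of_pos hB
  have h1B : 1 - betaFn γ ε μ = (1 - γ) / (1 - γ * (1 - ε) * μ) := one_sub_beta hD.ne'
  have hkey : (1 - γ) / (1 - γ * (1 - ε) * μ) ≤ -Real.log (betaFn γ ε μ) := by linarith
  have hpos : 0 < (1 - γ) / (1 - γ * (1 - ε) * μ) := div_pos (by linarith) hD
  have h2 : Kfn γ ε μ = (-Real.log (1 - μ)) / (-Real.log (betaFn γ ε μ)) := by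
    rw [Kfn, neg_div_neg_eq]
  rw [h2]
  calc (-Real.log (1 - μ)) / (-Real.log (betaFn γ ε μ))
      ≤ (-Real.log (1 - μ)) / ((1 - γ) / (1 - γ * (1 - ε) * μ)) := by
        apply div_le_div_of_nonneg_left hL.le hpos hkey
    _ = (-Real.log (1 - μ)) * (1 - γ * (1 - ε) * μ) / (1 - γ) := by
        rw [div_div_eq_mul_div]

-- (-log(1-μ)) * γ * (1 - (1-ε)μ) / (1-γ) ≤ Kfn γ ε μ
lemma Kfn_ge {γ ε μ : ℝ} (hγ0 : 0 < γ) (hγ1 : γ < 1) (hε0 : 0 < ε) (hε1 : ε < 1)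
    (hμ0 : 0 < μ) (hμ1 : μ < 1) :
    (-Real.log (1 - μ)) * (γ * (1 - (1 - ε) * μ)) / (1 - γ) ≤ Kfn γ ε μ := by
  have hD := denom_pos hγ0 hγ1 hε0 hε1 hμ0.le hμ1
  have hB := beta_pos hγ0 hγ1 hε0 hε1 hμ0.le hμ1
  have hB1 := beta_lt_one hγ0 hγ1 hε0 hε1 hμ0.le hμ1
  have hL : 0 < -Real.log (1 - μ) := by
    have := Real.log_neg (show (0:ℝ) < 1 - μ by linarith) (by linarith); linarith
  have hlogi : Real.log (betaFn γ ε μ)⁻¹ ≤ (betaFn γ ε μ)⁻¹ - 1 :=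
    Real.log_le_sub_one_of_pos (inv_pos.mpr hB)
  rw [Real.log_inv] at hlogi
  have hkey : -Real.log (betaFn γ ε μ) ≤ (1 - betaFn γ ε μ) / betaFn γ ε μ := by
    rw [sub_div, div_self hB.ne']
    have : (betaFn γ ε μ)⁻¹ = 1 / betaFn γ ε μ := (one_div _).symm
    linarith [hlogi, this ▸ hlogi]
  have hlogneg := logbeta_neg hγ0 hγ1 hε0 hε1 hμ0.le hμ1
  have h2 : Kfn γ ε μ = (-Real.log (1 - μ)) / (-Real.log (betaFn γ ε μ)) := by
    rw [Kfn, neg_div_neg_eq]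
  rw [h2]
  have hq : (1 - betaFn γ ε μ) / betaFn γ ε μ = (1 - γ) / (γ * (1 - (1 - ε) * μ)) := by
    have hnum : 0 < γ * (1 - (1 - ε) * μ) := by
      have h2 : (1 - ε) * μ ≤ μ := mul_le_of_le_one_left hμ0.le (by linarith)
      have : 0 < 1 - (1 - ε) * μ := by linarith
      positivity
    rw [one_sub_beta hD.ne', betaFn]
    field_simp
  calc (-Real.log (1 - μ)) * (γ * (1 - (1 - ε) * μ)) / (1 - γ)
      = (-Real.log (1 - μ)) / ((1 - γ) / (γ * (1 - (1 - ε) * μ))) := by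
        rw [div_div_eq_mul_div]
    _ ≤ (-Real.log (1 - μ)) / (-Real.log (betaFn γ ε μ)) := by
        apply div_le_div_of_nonneg_left hL.le (by linarith)
        rw [← hq]; exact hkey

lemma Kfn_gap {γ ε x y : ℝ} (hγ0 : 0 < γ) (hγ1 : γ < 1) (hε0 : 0 < ε) (hε1 : ε < 1)
    (hx0 : 0 < x) (hx1 : x < 1) (hy0 : 0 < y) (hy1 : y < 1)
    (hΔ : 0 < -Real.log (1 - y) * (1 - y) - -Real.log (1 - x) * (1 - x))
    (hγ' : 1 - γ < (-Real.log (1 - y) * (1 - y) - -Real.log (1 - x) * (1 - x)) /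
      (4 * (-Real.log (1 - x) + -Real.log (1 - y) + 1)))
    (hε' : ε < (-Real.log (1 - y) * (1 - y) - -Real.log (1 - x) * (1 - x)) /
      (4 * (-Real.log (1 - x) + -Real.log (1 - y) + 1))) :
    1 ≤ Kfn γ ε y - Kfn γ ε x := by
  set Lx := -Real.log (1 - x) with hLxdef
  set Ly := -Real.log (1 - y) with hLydef
  have hLx : 0 < Lx := by
    have := Real.log_neg (show (0:ℝ) < 1 - x by linarith) (by linarith)
    rw [hLxdef]; linarith
  have hLy : 0 < Ly := by
    have := Real.log_neg (show (0:ℝ) < 1 - y by linarith) (by linarith)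
    rw [hLydef]; linarith
  set Δ := Ly * (1 - y) - Lx * (1 - x) with hΔdef
  set C := Lx + Ly + 1 with hCdef
  have hC : 1 ≤ C := by rw [hCdef]; linarith
  have hC0 : 0 < 4 * C := by linarith
  have hγ2 : (1 - γ) * (4 * C) < Δ := by
    rw [← lt_div_iff₀ hC0]; exact hγ'
  have hε2 : ε * (4 * C) < Δ := by
    rw [← lt_div_iff₀ hC0]; exact hε'
  -- the two bounds
  have hKy := Kfn_ge hγ0 hγ1 hε0 hε1 hy0 hy1
  have hKx := Kfn_le hγ0 hγ1 hε0 hε1 hx0 hx1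
  set A := Ly * (γ * (1 - (1 - ε) * y)) with hAdef
  set E := Lx * (1 - γ * (1 - ε) * x) with hEdef
  have hγε : 0 ≤ 1 - γ * (1 - ε) := by
    have : γ * (1 - ε) ≤ γ := mul_le_of_le_one_right hγ0.le (by linarith)
    linarith
  have hA : Ly * ((1 - y) - (1 - γ)) ≤ A := by
    rw [hAdef]
    apply mul_le_mul_of_nonneg_left _ hLy.le
    nlinarith [mul_nonneg hy0.le hγε]
  have hE : E ≤ Lx * ((1 - x) + (1 - γ) + ε) := by
    rw [hEdef]
    apply mul_le_mul_of_nonneg_left _ hLx.le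
    nlinarith [mul_le_of_le_one_left hγε hx1.le, mul_le_of_le_one_left hε0.le hγ1.le]
  have hAE : 1 - γ ≤ A - E := by nlinarith
  have h1γ : 0 < 1 - γ := by linarith
  have hfinal : (A - E) / (1 - γ) ≥ 1 := by
    rw [ge_iff_le, le_div_iff₀ h1γ]; linarith
  have : A / (1 - γ) - E / (1 - γ) = (A - E) / (1 - γ) := by ring
  linarith [hKy, hKx, this ▸ hfinal]

lemma Kfn_contOn {γ ε a b : ℝ} (hγ0 : 0 < γ) (hγ1 : γ < 1) (hε0 : 0 < ε) (hε1 : ε < 1)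
    (ha : 0 < a) (hb : b < 1) :
    ContinuousOn (Kfn γ ε) (Set.Icc a b) := by
  have hsub : ∀ μ ∈ Set.Icc a b, 0 ≤ μ ∧ μ < 1 := fun μ hμ => ⟨ha.le.trans hμ.1, lt_of_le_of_lt hμ.2 hb⟩
  have c1 : ContinuousOn (fun μ : ℝ => Real.log (1 - μ)) (Set.Icc a b) := by
    apply ContinuousOn.log
    · exact (continuous_const.sub continuous_id).continuousOn
    · intro μ hμ
      have := (hsub μ hμ).2; intro h; linarith [sub_eq_zero.mp h]
  have cβ : ContinuousOn (fun μ : ℝ => betaFn γ ε μ) (Set.Icc a b) := by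
    apply ContinuousOn.div
    · exact (continuous_const.mul (continuous_const.sub (continuous_const.mul continuous_id))).continuousOn
    · exact (continuous_const.sub (continuous_const.mul continuous_id)).continuousOn
    · intro μ hμ
      exact (denom_pos hγ0 hγ1 hε0 hε1 (hsub μ hμ).1 (hsub μ hμ).2).ne'
  have c2 : ContinuousOn (fun μ : ℝ => Real.log (betaFn γ ε μ)) (Set.Icc a b) := by
    apply ContinuousOn.log cβ
    intro μ hμ
    exact (beta_pos hγ0 hγ1 hε0 hε1 (hsub μ hμ).1 (hsub μ hμ).2).ne'
  apply ContinuousOn.div c1 c2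
  intro μ hμ
  exact (logbeta_neg hγ0 hγ1 hε0 hε1 (hsub μ hμ).1 (hsub μ hμ).2).ne

lemma exists_fixed {γ ε a b : ℝ} (hγ0 : 0 < γ) (hγ1 : γ < 1) (hε0 : 0 < ε) (hε1 : ε < 1)
    (ha : 0 < a) (hab : a ≤ b) (hb : b < 1)
    (hgap : 1 ≤ |Kfn γ ε b - Kfn γ ε a|) :
    ∃ μ ∈ Set.Icc a b, ∃ n : ℕ, μ = 1 - (betaFn γ ε μ) ^ n := by
  have hKa : 0 < Kfn γ ε a := Kfn_pos hγ0 hγ1 hε0 hε1 ha (lt_of_le_of_lt hab hb)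
  have hKb : 0 < Kfn γ ε b := Kfn_pos hγ0 hγ1 hε0 hε1 (lt_of_lt_of_le ha hab) hb
  set m : ℤ := ⌈min (Kfn γ ε a) (Kfn γ ε b)⌉ with hm
  have hmin : 0 < min (Kfn γ ε a) (Kfn γ ε b) := lt_min hKa hKb
  have hm0 : 0 < m := Int.ceil_pos.mpr hmin
  have hle1 : min (Kfn γ ε a) (Kfn γ ε b) ≤ (m:ℝ) := Int.le_ceil _
  have hle2 : (m:ℝ) ≤ max (Kfn γ ε a) (Kfn γ ε b) := by
    have h1 : (m:ℝ) < min (Kfn γ ε a) (Kfn γ ε b) + 1 := Int.ceil_lt_add_one _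
    have h2 : min (Kfn γ ε a) (Kfn γ ε b) + 1 ≤ max (Kfn γ ε a) (Kfn γ ε b) := by
      rcases le_total (Kfn γ ε a) (Kfn γ ε b) with h | h
      · rw [min_eq_left h, max_eq_right h]
        have : Kfn γ ε b - Kfn γ ε a ≥ 1 ∨ -(Kfn γ ε b - Kfn γ ε a) ≥ 1 := by
          rcases abs_cases (Kfn γ ε b - Kfn γ ε a) with ⟨he, _⟩ | ⟨he, _⟩
          · left; linarith [hgap, he]
          · right; linarith [hgap, he]
        rcases this with h' | h' <;> linarith
      · rw [min_eq_right h, max_eq_left h]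
        rcases abs_cases (Kfn γ ε b - Kfn γ ε a) with ⟨he, _⟩ | ⟨he, _⟩ <;> linarith
    linarith
  have hmem : (m:ℝ) ∈ Set.uIcc (Kfn γ ε a) (Kfn γ ε b) := by
    rw [Set.uIcc]
    exact ⟨hle1, hle2⟩
  have hcont : ContinuousOn (Kfn γ ε) (Set.uIcc a b) := by
    rw [Set.uIcc_of_le hab]; exact Kfn_contOn hγ0 hγ1 hε0 hε1 ha hb
  have := intermediate_value_uIcc hcont hmem
  obtain ⟨μ, hμmem, hμval⟩ := this
  rw [Set.uIcc_of_le hab] at hμmem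
  refine ⟨μ, hμmem, m.toNat, ?_⟩
  have hμ0 : 0 < μ := lt_of_lt_of_le ha hμmem.1
  have hμ1 : μ < 1 := lt_of_le_of_lt hμmem.2 hb
  have hB := beta_pos hγ0 hγ1 hε0 hε1 hμ0.le hμ1
  have hlogneg := logbeta_neg hγ0 hγ1 hε0 hε1 hμ0.le hμ1
  have hlog : Real.log (1 - μ) = (m:ℝ) * Real.log (betaFn γ ε μ) := by
    rw [Kfn, div_eq_iff hlogneg.ne] at hμval
    exact hμval
  have hcast : ((m.toNat : ℤ) : ℝ) = (m : ℝ) := by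
    rw [Int.toNat_of_nonneg hm0.le]
  have hpow : betaFn γ ε μ ^ m.toNat = 1 - μ := by
    have h1 : Real.log (betaFn γ ε μ ^ m.toNat) = (m.toNat : ℝ) * Real.log (betaFn γ ε μ) :=
      Real.log_pow _ _
    have h2 : (m.toNat : ℝ) = (m : ℝ) := by exact_mod_cast hcast
    have h3 : Real.log (betaFn γ ε μ ^ m.toNat) = Real.log (1 - μ) := by
      rw [h1, h2, hlog]
    have hp : 0 < betaFn γ ε μ ^ m.toNat := pow_pos hB _
    have h1μ : 0 < 1 - μ := by linarith
    exact Real.log_injOn_pos (Set.mem_Ioi.mpr hp) (Set.mem_Ioi.mpr h1μ) h3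
  linarith [hpow]

lemma hasDeriv_H {x : ℝ} (hx : x < 1) :
    HasDerivAt (fun t : ℝ => -Real.log (1 - t) * (1 - t)) (Real.log (1 - x) + 1) x := by
  have h1 : HasDerivAt (fun t : ℝ => 1 - t) (-1) x := by
    simpa using (hasDerivAt_id x).const_sub 1
  have h2 : HasDerivAt (fun t : ℝ => Real.log (1 - t)) ((1 - x)⁻¹ * (-1)) x :=
    (Real.hasDerivAt_log (by linarith : (1:ℝ) - x ≠ 0)).comp x h1
  have h3 := (h2.neg).mul h1
  have h4 : HasDerivAt (fun t : ℝ => -Real.log (1 - t) * (1 - t))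
      (-((1 - x)⁻¹ * -1) * (1 - x) + -Real.log (1 - x) * -1) x := h3
  convert h4 using 1
  have : (1:ℝ) - x ≠ 0 := by linarith
  simp only [neg_mul, mul_neg, mul_one, neg_neg, inv_mul_cancel₀ this]
  ring

lemma H_contOn {s t : ℝ} (ht : t < 1) :
    ContinuousOn (fun u : ℝ => -Real.log (1 - u) * (1 - u)) (Set.Icc s t) := by
  apply ContinuousOn.mul
  · apply ContinuousOn.neg
    apply ContinuousOn.log
    · exact (continuous_const.sub continuous_id).continuousOn
    · intro u hu
      have : u ≤ t := hu.2
      intro h; linarith [sub_eq_zero.mp h]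
  · exact (continuous_const.sub continuous_id).continuousOn

lemma exists_pair {w t : ℝ} (hw : 0 < w) (hwt : w < t) (ht : t < 1) :
    ∃ a b : ℝ, w < a ∧ a < b ∧ b < t ∧
      -Real.log (1 - a) * (1 - a) ≠ -Real.log (1 - b) * (1 - b) := by
  set H : ℝ → ℝ := fun u => -Real.log (1 - u) * (1 - u) with hH
  set c0 : ℝ := 1 - Real.exp (-1) with hc0
  have hc01 : c0 < 1 := by
    have : 0 < Real.exp (-1) := Real.exp_pos _
    rw [hc0]; linarith
  set m : ℝ := (w + t) / 2 with hm
  have hwm : w < m := by rw [hm]; linarith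
  have hmt : m < t := by rw [hm]; linarith
  rcases lt_or_ge m c0 with hcase | hcase
  · -- increasing region: pick a b in (w, m) ⊆ (0, c0)
    refine ⟨w + (m - w)/3, w + 2*(m - w)/3, by linarith, by linarith, by linarith, ?_⟩
    have hmono : StrictMonoOn H (Set.Icc 0 c0) := by
      apply strictMonoOn_of_deriv_pos (convex_Icc 0 c0) (H_contOn hc01)
      intro x hx
      rw [interior_Icc] at hx
      have hx1 : x < 1 := lt_trans hx.2 hc01
      rw [(hasDeriv_H hx1).deriv]
      have : Real.exp (-1) < 1 - x := by
        have := hx.2; rw [hc0] at this; linarith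
      have hlog : -1 < Real.log (1 - x) := by
        rwa [Real.lt_log_iff_exp_lt (by linarith)]
      linarith
    have h1 : (w + (m - w)/3) ∈ Set.Icc 0 c0 := ⟨by linarith, by linarith⟩
    have h2 : (w + 2*(m - w)/3) ∈ Set.Icc 0 c0 := ⟨by linarith, by linarith⟩
    exact ne_of_lt (hmono h1 h2 (by linarith))
  · -- decreasing region: pick a b in (m, t) ⊆ (c0, 1)
    refine ⟨m + (t - m)/3, m + 2*(t - m)/3, by linarith, by linarith, by linarith, ?_⟩
    have hmono : StrictAntiOn H (Set.Icc c0 t) := by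
      apply strictAntiOn_of_deriv_neg (convex_Icc c0 t) (H_contOn ht)
      intro x hx
      rw [interior_Icc] at hx
      have hx1 : x < 1 := lt_trans hx.2 ht
      rw [(hasDeriv_H hx1).deriv]
      have h1x : 1 - x < Real.exp (-1) := by
        have := hx.1; rw [hc0] at this; linarith
      have hlog : Real.log (1 - x) < -1 := by
        have := Real.log_lt_log (by linarith : (0:ℝ) < 1 - x) h1x
        rwa [Real.log_exp] at this
      linarith
    have h1 : (m + (t - m)/3) ∈ Set.Icc c0 t := ⟨by linarith, by linarith⟩
    have h2 : (m + 2*(t - m)/3) ∈ Set.Icc c0 t := ⟨by linarith, by linarith⟩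
    exact ne_of_gt (hmono h1 h2 (by linarith))

noncomputable def eqShares (g l γ ε : ℝ) : Set ℝ :=
  {μ | μ ∈ Set.Ioo (0:ℝ) 1 ∧ (∃ K : ℕ, μ = 1 - (betaFn γ ε μ) ^ K) ∧
    ((1 - ε) * (1 - μ) / (1 - (1 - ε) * μ)) * μ > g ∧
    μ < (1 / (γ * (1 - ε))) * (l / (1 + l))}

lemma icc_aux {g a b ε μ : ℝ} (hg : 0 < g) (hga : g < a) (ha0 : 0 < a)
    (hμa : a ≤ μ) (hμb : μ ≤ b) (hb1 : b < 1) (hε0 : 0 < ε)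
    (hεicc : ε < (1 - b) * (a - g) / a) :
    ((1 - ε) * (1 - μ) / (1 - (1 - ε) * μ)) * μ > g := by
  have hμ0 : 0 < μ := lt_of_lt_of_le ha0 hμa
  have hμ1 : μ < 1 := lt_of_le_of_lt hμb hb1
  have hd : 0 < 1 - (1 - ε) * μ := by nlinarith
  rw [gt_iff_lt, div_mul_eq_mul_div, lt_div_iff₀ hd]
  have hεa : ε * a < (1 - b) * (a - g) := (lt_div_iff₀ ha0).mp hεicc
  have hεb : ε < 1 - b := by
    have h1 : (1 - b) * (a - g) / a < 1 - b := by
      rw [div_lt_iff₀ ha0]; nlinarith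
    linarith
  have hstep : ε * μ < (μ - g) * (1 - b) := by
    nlinarith [mul_le_mul_of_nonneg_right hεb.le (show (0:ℝ) ≤ μ - a by linarith)]
  nlinarith [hstep, mul_nonneg (mul_nonneg hε0.le hμ0.le) (show (0:ℝ) ≤ μ - g by linarith),
    mul_le_mul_of_nonneg_left (show 1 - b ≤ 1 - μ by linarith) (show (0:ℝ) ≤ μ - g by linarith)]

set_option maxHeartbeats 1000000 in
theorem stmt_10 (g l : ℝ) (hg : 0 < g) (hl : 0 < l) (hgl : g < l / (1 + l)) :
    ∀ δ > (0:ℝ), ∃ γbar ∈ Set.Ioo (0:ℝ) 1, ∃ εbar ∈ Set.Ioo (0:ℝ) 1,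
      ∀ γ ∈ Set.Ioo γbar 1, ∀ ε ∈ Set.Ioo (0:ℝ) εbar,
        |sSup (eqShares g l γ ε ∪ {0}) - l / (1 + l)| < δ := by
  intro δ hδ
  set μs := l / (1 + l) with hμsdef
  have hl1 : 0 < 1 + l := by linarith
  have hμs0 : 0 < μs := div_pos hl hl1
  have hμs1 : μs < 1 := by rw [hμsdef, div_lt_one hl1]; linarith
  set w := max g (μs - δ) with hwdef
  have hw0 : 0 < w := lt_of_lt_of_le hg (le_max_left _ _)
  have hwμs : w < μs := max_lt hgl (by linarith)
  obtain ⟨a, b, hwa, hab, hbμs, hne⟩ := exists_pair hw0 hwμs hμs1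
  have ha0 : 0 < a := lt_trans hw0 hwa
  have hb1 : b < 1 := lt_trans hbμs hμs1
  have ha1 : a < 1 := lt_trans hab hb1
  have hga : g < a := lt_of_le_of_lt (le_max_left g _) hwa
  have hLa : 0 < -Real.log (1 - a) := by
    have := Real.log_neg (by linarith : (0:ℝ) < 1 - a) (by linarith); linarith
  have hLb : 0 < -Real.log (1 - b) := by
    have := Real.log_neg (by linarith : (0:ℝ) < 1 - b) (by linarith); linarith
  set Ha := -Real.log (1 - a) * (1 - a) with hHa
  set Hb := -Real.log (1 - b) * (1 - b) with hHb
  set Cab := -Real.log (1 - a) + -Real.log (1 - b) + 1 with hCab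
  have hCab0 : 0 < Cab := by rw [hCab]; linarith
  set q := |Hb - Ha| / (4 * Cab) with hq
  have hΔ0 : 0 < |Hb - Ha| := abs_pos.mpr (sub_ne_zero.mpr (Ne.symm hne))
  have hq0 : 0 < q := div_pos hΔ0 (by linarith)
  set r := μs / (μs + δ / 2) with hr
  have hr0 : 0 < r := div_pos hμs0 (by linarith)
  have hr1 : r < 1 := by rw [hr, div_lt_one (by linarith)]; linarith
  have hεicc0 : 0 < (1 - b) * (a - g) / a := div_pos (mul_pos (by linarith) (by linarith)) ha0
  refine ⟨max (max (1 - q) ((1 + r) / 2)) (1 / 2),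
    ⟨lt_of_lt_of_le (by norm_num) (le_max_right _ _),
     max_lt (max_lt (by linarith) (by linarith)) (by norm_num)⟩,
    min (min q ((1 - b) * (a - g) / a)) (min ((1 - r) / 2) (1 / 2)),
    ⟨lt_min (lt_min hq0 hεicc0) (lt_min (by linarith) (by norm_num)),
     lt_of_le_of_lt (le_trans (min_le_right _ _) (min_le_right _ _)) (by norm_num)⟩,
    ?_⟩
  rintro γ ⟨hγbar, hγ1⟩ ε ⟨hε0, hεbar⟩
  have hγ0 : 0 < γ := lt_trans (lt_of_lt_of_le (by norm_num) (le_max_right _ _)) hγbar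
  have hγq : 1 - γ < q := by
    have := lt_of_le_of_lt (le_trans (le_max_left (1 - q) _) (le_max_left _ _)) hγbar
    linarith
  have hγr : (1 + r) / 2 < γ :=
    lt_of_le_of_lt (le_trans (le_max_right (1 - q) _) (le_max_left _ _)) hγbar
  have hεq : ε < q := lt_of_lt_of_le hεbar (le_trans (min_le_left _ _) (min_le_left _ _))
  have hεicc : ε < (1 - b) * (a - g) / a :=
    lt_of_lt_of_le hεbar (le_trans (min_le_left _ _) (min_le_right _ _))
  have hεr : ε < (1 - r) / 2 :=
    lt_of_lt_of_le hεbar (le_trans (min_le_right _ _) (min_le_left _ _))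
  have hε1 : ε < 1 := by
    have := lt_of_lt_of_le hεbar (le_trans (min_le_right _ _) (min_le_right _ _)); linarith
  -- gap
  have hgap : 1 ≤ |Kfn γ ε b - Kfn γ ε a| := by
    rcases lt_or_gt_of_ne hne with hlt | hgt
    · have heq : (Hb - Ha) / (4 * Cab) = q := by
        rw [hq, abs_of_pos (by rw [hHa, hHb] at hlt ⊢; linarith)]
      have h := Kfn_gap hγ0 hγ1 hε0 hε1 ha0 ha1 (lt_trans ha0 hab) hb1
        (by rw [← hHa, ← hHb]; rw [hHa, hHb] at hlt; linarith)
        (by rw [← hHa, ← hHb, ← hCab, heq]; exact hγq)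
        (by rw [← hHa, ← hHb, ← hCab, heq]; exact hεq)
      calc (1:ℝ) ≤ Kfn γ ε b - Kfn γ ε a := h
        _ ≤ |Kfn γ ε b - Kfn γ ε a| := le_abs_self _
    · have heq : (Ha - Hb) / (4 * (-Real.log (1 - b) + -Real.log (1 - a) + 1)) = q := by
        rw [hq, abs_of_neg (by rw [hHa, hHb] at hgt ⊢; linarith), hCab]
        ring
      have h := Kfn_gap hγ0 hγ1 hε0 hε1 (lt_trans ha0 hab) hb1 ha0 ha1
        (by rw [← hHa, ← hHb]; rw [hHa, hHb] at hgt; linarith)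
        (by rw [← hHa, ← hHb, heq]; exact hγq)
        (by rw [← hHa, ← hHb, heq]; exact hεq)
      calc (1:ℝ) ≤ Kfn γ ε a - Kfn γ ε b := h
        _ ≤ |Kfn γ ε b - Kfn γ ε a| := by rw [abs_sub_comm]; exact le_abs_self _
  obtain ⟨μ, hμmem, n, hfix⟩ := exists_fixed hγ0 hγ1 hε0 hε1 ha0 hab.le hb1 hgap
  have hμa : a ≤ μ := hμmem.1
  have hμb : μ ≤ b := hμmem.2
  have hμ0 : 0 < μ := lt_of_lt_of_le ha0 hμa
  have hμ1 : μ < 1 := lt_of_le_of_lt hμb hb1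
  -- μ ∈ eqShares
  have hμeq : μ ∈ eqShares g l γ ε := by
    refine ⟨⟨hμ0, hμ1⟩, ⟨n, hfix⟩, ?_, ?_⟩
    · exact icc_aux hg hga ha0 hμa hμb hb1 hε0 hεicc
    · -- ICD
      have hcpos : 0 < γ * (1 - ε) := mul_pos hγ0 (by linarith)
      have hc1 : γ * (1 - ε) ≤ 1 := by nlinarith
      have h1 : (1:ℝ) ≤ 1 / (γ * (1 - ε)) := by
        rw [le_div_iff₀ hcpos]; linarith
      have h2 : μs ≤ 1 / (γ * (1 - ε)) * μs := by
        nlinarith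
      rw [← hμsdef]
      linarith
  -- sSup bounds
  have hγcr : r ≤ γ * (1 - ε) := by
    have h2 : (1 + r) / 2 < 1 - ε := by linarith
    have h4 : ((1 + r) / 2) * ((1 + r) / 2) < γ * (1 - ε) :=
      mul_lt_mul'' hγr h2 (by linarith) (by linarith)
    nlinarith [sq_nonneg (1 - r)]
  have hcpos : 0 < γ * (1 - ε) := mul_pos hγ0 (by linarith)
  have hinv : 1 / (γ * (1 - ε)) ≤ 1 / r := one_div_le_one_div_of_le hr0 hγcr
  have heq2 : (1 / r) * μs = μs + δ / 2 := by
    rw [hr]; field_simp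
  have hub : ∀ z ∈ eqShares g l γ ε ∪ {0}, z ≤ μs + δ / 2 := by
    rintro z (hz | hz)
    · obtain ⟨_, _, _, hICD⟩ := hz
      rw [← hμsdef] at hICD
      have : 1 / (γ * (1 - ε)) * μs ≤ (1 / r) * μs :=
        mul_le_mul_of_nonneg_right hinv hμs0.le
      linarith
    · rw [Set.mem_singleton_iff] at hz
      rw [hz]; linarith
  have hbdd : BddAbove (eqShares g l γ ε ∪ {0}) := ⟨μs + δ / 2, fun z hz => hub z hz⟩
  have hsup_le : sSup (eqShares g l γ ε ∪ {0}) ≤ μs + δ / 2 :=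
    csSup_le ⟨0, Or.inr rfl⟩ hub
  have hμle : μ ≤ sSup (eqShares g l γ ε ∪ {0}) := le_csSup hbdd (Or.inl hμeq)
  rw [abs_lt]
  constructor
  · have hwge : μs - δ ≤ w := le_max_right _ _
    linarith
  · linarith
end

section
/- The function d is well-defined and continuous on the set {(γ,ε,μ) ∈ ℝ³ : γ ∈ (0,1], ε ∈ [0,1), μ ∈ (0,1)}. In particular, for every ε ∈ [0,1) and μ ∈ (0,1), d(γ̃,ε̃,μ̃) → d(1,ε,μ) = 1 + (1-ε)·log(1-μ)·(1-μ)/(1-(1-ε)·μ) as (γ̃,ε̃,μ̃) → (1,ε,μ) within the set. -/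
noncomputable def betaDeriv (γ ε μ : ℝ) : ℝ :=
  -((1 - γ) * γ * (1 - ε)) / (1 - γ * (1 - ε) * μ) ^ 2

noncomputable def dFn (γ ε μ : ℝ) : ℝ :=
  if γ < 1 then
    1 + Real.log (1 - μ) * (1 - μ) * betaDeriv γ ε μ
      / (betaFn γ ε μ * Real.log (betaFn γ ε μ))
  else
    1 + (1 - ε) * Real.log (1 - μ) * (1 - μ) / (1 - (1 - ε) * μ)

noncomputable def dDomain : Set (ℝ × ℝ × ℝ) :=
  {p | p.1 ∈ Set.Ioc (0:ℝ) 1 ∧ p.2.1 ∈ Set.Ico (0:ℝ) 1 ∧ p.2.2 ∈ Set.Ioo (0:ℝ) 1}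

/-- Auxiliary: `(x-1)/(x log x)` with removable singularity at 1. -/
noncomputable def fAux (x : ℝ) : ℝ := if x = 1 then 1 else (x - 1) / (x * Real.log x)

lemma fAux_contAt {x : ℝ} (hx : 0 < x) : ContinuousAt fAux x := by
  rcases eq_or_ne x 1 with rfl | hne
  · -- continuity at 1
    have hslope : Filter.Tendsto (fun y : ℝ => Real.log y / (y - 1))
        (nhdsWithin 1 {(1:ℝ)}ᶜ) (nhds 1) := by
      have h := Real.hasDerivAt_log (one_ne_zero (α := ℝ))
      rw [hasDerivAt_iff_tendsto_slope] at h
      simp only [inv_one] at h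
      exact h.congr fun y => by rw [slope_def_field, Real.log_one, sub_zero]
    have hinv : Filter.Tendsto (fun y : ℝ => y⁻¹) (nhdsWithin 1 {(1:ℝ)}ᶜ) (nhds 1) := by
      have : Filter.Tendsto (fun y : ℝ => y⁻¹) (nhds 1) (nhds 1) := by
        simpa using (continuousAt_inv₀ (one_ne_zero (α := ℝ))).tendsto
      exact this.mono_left nhdsWithin_le_nhds
    have h2 : Filter.Tendsto (fun y : ℝ => y⁻¹ * (Real.log y / (y - 1))⁻¹)
        (nhdsWithin 1 {(1:ℝ)}ᶜ) (nhds 1) := by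
      have := hinv.mul (hslope.inv₀ one_ne_zero)
      simpa using this
    have h3 : Filter.Tendsto fAux (nhdsWithin 1 {(1:ℝ)}ᶜ) (nhds 1) := by
      refine h2.congr' ?_
      filter_upwards [self_mem_nhdsWithin] with y hy
      have hy' : y ≠ 1 := hy
      simp only [fAux, if_neg hy']
      rw [inv_div, inv_mul_eq_div, div_div, mul_comm (Real.log y) y]
    have hpure : Filter.Tendsto fAux (pure (1:ℝ)) (nhds 1) := by
      have := tendsto_pure_nhds fAux 1
      simpa [fAux] using this
    have htot : Filter.Tendsto fAux (nhdsWithin 1 {(1:ℝ)}ᶜ ⊔ pure 1) (nhds 1) :=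
      Filter.tendsto_sup.mpr ⟨h3, hpure⟩
    rw [nhdsNE_sup_pure] at htot
    have hval : fAux 1 = 1 := if_pos rfl
    rw [ContinuousAt, hval]
    exact htot
  · have hlog : Real.log x ≠ 0 := Real.log_ne_zero_of_pos_of_ne_one hx hne
    have hc : ContinuousAt (fun y : ℝ => (y - 1) / (y * Real.log y)) x := by
      apply ContinuousAt.div (by fun_prop)
      · exact continuousAt_id.mul (Real.continuousAt_log hx.ne')
      · exact mul_ne_zero hx.ne' hlog
    apply hc.congr
    filter_upwards [isOpen_compl_singleton.mem_nhds hne] with y hy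
    exact (if_neg (show y ≠ 1 from hy)).symm

lemma beta_sub_one {γ ε μ : ℝ} (hD : 1 - γ * (1 - ε) * μ ≠ 0) :
    betaFn γ ε μ - 1 = (γ - 1) / (1 - γ * (1 - ε) * μ) := by
  unfold betaFn; field_simp; ring

lemma betaDeriv_eq {γ ε μ : ℝ} (hD : 1 - γ * (1 - ε) * μ ≠ 0) :
    betaDeriv γ ε μ = (γ * (1 - ε) / (1 - γ * (1 - ε) * μ)) * (betaFn γ ε μ - 1) := by
  rw [beta_sub_one hD]; unfold betaDeriv; field_simp; ring

/-- The continuous reformulation of `dFn`. -/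
noncomputable def gFn (p : ℝ × ℝ × ℝ) : ℝ :=
  1 + Real.log (1 - p.2.2) * (1 - p.2.2) *
      (p.1 * (1 - p.2.1) / (1 - p.1 * (1 - p.2.1) * p.2.2)) *
      fAux (betaFn p.1 p.2.1 p.2.2)

lemma dDomain_facts {p : ℝ × ℝ × ℝ} (hp : p ∈ dDomain) :
    0 < 1 - p.1 * (1 - p.2.1) * p.2.2 ∧ 0 < betaFn p.1 p.2.1 p.2.2 := by
  obtain ⟨⟨hγ0, hγ1⟩, ⟨hε0, hε1⟩, ⟨hμ0, hμ1⟩⟩ := hp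
  have a1 : p.1 * (1 - p.2.1) ≤ 1 := by nlinarith
  have a2 : p.1 * (1 - p.2.1) * p.2.2 ≤ p.2.2 := by nlinarith
  have hD : 0 < 1 - p.1 * (1 - p.2.1) * p.2.2 := by linarith
  refine ⟨hD, ?_⟩
  unfold betaFn
  apply div_pos _ hD
  apply mul_pos hγ0
  nlinarith

lemma dFn_eq_gFn : Set.EqOn (fun p : ℝ × ℝ × ℝ => dFn p.1 p.2.1 p.2.2) gFn dDomain := by
  intro p hp
  obtain ⟨hD, hB⟩ := dDomain_facts hp
  obtain ⟨γ, ε, μ⟩ := p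
  obtain ⟨⟨hγ0, hγ1⟩, ⟨hε0, hε1⟩, ⟨hμ0, hμ1⟩⟩ := hp
  simp only at hD hB hγ0 hγ1 hε0 hε1 hμ0 hμ1 ⊢
  rcases eq_or_lt_of_le hγ1 with h1 | hlt
  · -- γ = 1
    subst h1
    have hbeta1 : betaFn 1 ε μ = 1 := by
      unfold betaFn
      simp only [one_mul]
      exact div_self (by simpa only [one_mul] using hD.ne')
    simp only [dFn, gFn, if_neg (lt_irrefl (1:ℝ)), hbeta1, fAux, eq_self_iff_true, if_true]
    ring
  · -- γ < 1
    have hBne : betaFn γ ε μ ≠ 1 := by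
      have hb1 := beta_sub_one (γ := γ) (ε := ε) (μ := μ) hD.ne'
      have hneg : (γ - 1) / (1 - γ * (1 - ε) * μ) < 0 :=
        div_neg_of_neg_of_pos (by linarith) hD
      intro h
      rw [h, sub_self] at hb1
      linarith [hb1 ▸ hneg]
    simp only [dFn, gFn, if_pos hlt, fAux, if_neg hBne]
    rw [betaDeriv_eq hD.ne']
    ring

lemma gFn_contOn : ContinuousOn gFn dDomain := by
  have hD : ∀ p ∈ dDomain, (1 : ℝ) - p.1 * (1 - p.2.1) * p.2.2 ≠ 0 :=
    fun p hp => (dDomain_facts hp).1.ne'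
  have hcβ : ContinuousOn (fun p : ℝ × ℝ × ℝ => betaFn p.1 p.2.1 p.2.2) dDomain := by
    unfold betaFn
    exact ContinuousOn.div (by fun_prop) (by fun_prop) hD
  have hcf : ContinuousOn (fun p : ℝ × ℝ × ℝ => fAux (betaFn p.1 p.2.1 p.2.2)) dDomain := by
    intro p hp
    exact Filter.Tendsto.comp (fAux_contAt (dDomain_facts hp).2).tendsto (hcβ p hp)
  have hlog : ContinuousOn (fun p : ℝ × ℝ × ℝ => Real.log (1 - p.2.2)) dDomain := by
    intro p hp
    obtain ⟨_, _, ⟨hμ0, hμ1⟩⟩ := hp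
    show ContinuousWithinAt (Real.log ∘ fun p : ℝ × ℝ × ℝ => 1 - p.2.2) dDomain p
    exact (Real.continuousAt_log (by linarith)).comp_continuousWithinAt
      ((continuous_const.sub (continuous_snd.comp continuous_snd)).continuousWithinAt)
  have hratio : ContinuousOn
      (fun p : ℝ × ℝ × ℝ => p.1 * (1 - p.2.1) / (1 - p.1 * (1 - p.2.1) * p.2.2)) dDomain :=
    ContinuousOn.div (by fun_prop) (by fun_prop) hD
  unfold gFn
  exact continuousOn_const.add (((hlog.mul (by fun_prop)).mul hratio).mul hcf)

theorem stmt_12 :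
    ContinuousOn (fun p : ℝ × ℝ × ℝ => dFn p.1 p.2.1 p.2.2) dDomain ∧
      ∀ ε ∈ Set.Ico (0:ℝ) 1, ∀ μ ∈ Set.Ioo (0:ℝ) 1,
        (dFn 1 ε μ = 1 + (1 - ε) * Real.log (1 - μ) * (1 - μ) / (1 - (1 - ε) * μ)) ∧
        Filter.Tendsto (fun p : ℝ × ℝ × ℝ => dFn p.1 p.2.1 p.2.2)
          (nhdsWithin (1, ε, μ) dDomain) (nhds (dFn 1 ε μ)) := by
  have hcont : ContinuousOn (fun p : ℝ × ℝ × ℝ => dFn p.1 p.2.1 p.2.2) dDomain :=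
    gFn_contOn.congr dFn_eq_gFn
  refine ⟨hcont, ?_⟩
  intro ε hε μ hμ
  constructor
  · simp only [dFn, if_neg (lt_irrefl (1:ℝ))]
  · have hmem : ((1:ℝ), ε, μ) ∈ dDomain :=
      ⟨⟨zero_lt_one, le_refl 1⟩, hε, hμ⟩
    exact hcont _ hmem
end

section
/- Fix μ ∈ (0,1). For every Δ > 0 there exist γ̄ ∈ (0,1) and ε̄ ∈ (0,1) such that for all γ ∈ (γ̄, 1) and all ε ∈ (0, ε̄), there exist μ̂ ∈ (0,1) and K ∈ ℕ with μ̂ = 1 - β(γ,ε,μ̂)^K and |μ̂ - μ| < Δ. (That is, as (γ,ε) → (1,0), any cooperator share in (0,1) can be approximated arbitrarily well by a feasible steady-state cooperator share of some GrimK strategy, despite K being restricted to integers.) -/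
lemma mul_log_lt_right {s t : ℝ} (hs : Real.exp (-1) ≤ s) (hst : s < t) :
    s * Real.log s < t * Real.log t := by
  have he : (0:ℝ) < Real.exp (-1) := Real.exp_pos _
  have h : StrictMonoOn (fun x : ℝ => x * Real.log x) (Set.Ici (Real.exp (-1))) := by
    apply strictMonoOn_of_deriv_pos (convex_Ici _)
      (Real.continuous_mul_log.continuousOn)
    intro x hx
    rw [interior_Ici] at hx
    have hx0 : 0 < x := lt_trans he hx
    rw [Real.deriv_mul_log hx0.ne']
    have : -1 < Real.log x := by
      rw [← Real.log_exp (-1)]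
      exact Real.log_lt_log he hx
    linarith
  exact h hs (le_trans hs hst.le) hst

lemma mul_log_lt_left {s t : ℝ} (hs : 0 < s) (hst : s < t) (ht : t ≤ Real.exp (-1)) :
    t * Real.log t < s * Real.log s := by
  have he : (0:ℝ) < Real.exp (-1) := Real.exp_pos _
  have h : StrictAntiOn (fun x : ℝ => x * Real.log x) (Set.Icc s (Real.exp (-1))) := by
    apply strictAntiOn_of_deriv_neg (convex_Icc _ _)
      (Real.continuous_mul_log.continuousOn)
    intro x hx
    rw [interior_Icc] at hx
    have hx0 : 0 < x := lt_trans hs hx.1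
    rw [Real.deriv_mul_log hx0.ne']
    have : Real.log x < -1 := by
      rw [← Real.log_exp (-1)]
      exact Real.log_lt_log hx0 hx.2
    linarith
  exact h ⟨le_refl s, le_trans hst.le ht⟩ ⟨hst.le, ht⟩ hst


lemma beta_facts {γ ε x : ℝ} (hγ : γ ∈ Set.Ioo (0:ℝ) 1) (hε : ε ∈ Set.Ioo (0:ℝ) 1)
    (hx : x ∈ Set.Ioo (0:ℝ) 1) :
    0 < 1 - γ * (1 - ε) * x ∧ 0 < 1 - (1 - ε) * x ∧
      0 < betaFn γ ε x ∧ betaFn γ ε x < 1 := by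
  obtain ⟨hγ0, hγ1⟩ := hγ
  obtain ⟨hε0, hε1⟩ := hε
  obtain ⟨hx0, hx1⟩ := hx
  have hc1 : γ * (1 - ε) < 1 := by nlinarith
  have hD : 0 < 1 - γ * (1 - ε) * x := by nlinarith [mul_lt_mul_of_pos_right hc1 hx0]
  have hN : 0 < 1 - (1 - ε) * x := by nlinarith [mul_lt_mul_of_pos_right (show (1:ℝ) - ε < 1 by linarith) hx0]
  refine ⟨hD, hN, ?_, ?_⟩
  · exact div_pos (by positivity) hD
  · rw [betaFn, div_lt_one hD]; nlinarith

lemma Pbound {γ ε x : ℝ} (hγ : γ ∈ Set.Ioo (0:ℝ) 1) (hε : ε ∈ Set.Ioo (0:ℝ) 1)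
    (hx : x ∈ Set.Ioo (0:ℝ) 1) :
    |(1 - γ) * (Real.log (1 - x) / Real.log (betaFn γ ε x)) + (1 - x) * Real.log (1 - x)|
      ≤ (-Real.log (1 - x)) * ((1 - γ) + ε) := by
  obtain ⟨hD, hN, hβ0, hβ1⟩ := beta_facts hγ hε hx
  obtain ⟨hγ0, hγ1⟩ := hγ
  obtain ⟨hε0, hε1⟩ := hε
  obtain ⟨hx0, hx1⟩ := hx
  set β := betaFn γ ε x with hβdef
  set A := -Real.log (1 - x) with hA
  have hx1' : (0:ℝ) < 1 - x := by linarith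
  have hA0 : 0 < A := by
    rw [hA, neg_pos]
    exact Real.log_neg hx1' (by linarith)
  have hl0 : 0 < -Real.log β := by
    rw [neg_pos]; exact Real.log_neg hβ0 hβ1
  set l := -Real.log β with hldef
  -- 1 - β = (1-γ)/D
  have h1β : 1 - β = (1 - γ) / (1 - γ * (1 - ε) * x) := by
    rw [hβdef, betaFn]
    field_simp
    ring
  -- lower bound on l
  have hl_lb : (1 - γ) / (1 - γ * (1 - ε) * x) ≤ l := by
    have := Real.log_le_sub_one_of_pos hβ0
    rw [hldef]; linarith [h1β]
  -- upper bound on l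
  have hl_ub : l ≤ (1 - γ) / (γ * (1 - (1 - ε) * x)) := by
    have h2 := Real.log_le_sub_one_of_pos (inv_pos.mpr hβ0)
    rw [Real.log_inv] at h2
    have : β⁻¹ - 1 = (1 - γ) / (γ * (1 - (1 - ε) * x)) := by
      rw [hβdef, betaFn]
      field_simp
      ring
    rw [hldef]; linarith
  -- P = (1-γ) * A / l
  have hP : (1 - γ) * (Real.log (1 - x) / Real.log β) = (1 - γ) * (A / l) := by
    rw [hA, hldef, neg_div_neg_eq]
  rw [hP]
  have hγ' : (0:ℝ) < 1 - γ := by linarith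
  have hNγ : 0 < γ * (1 - (1 - ε) * x) := by positivity
  -- upper bound for P
  have hPub : (1 - γ) * (A / l) ≤ A * (1 - γ * (1 - ε) * x) := by
    have hlb' : 0 < (1 - γ) / (1 - γ * (1 - ε) * x) := div_pos hγ' hD
    have h3 : A / l ≤ A / ((1 - γ) / (1 - γ * (1 - ε) * x)) :=
      div_le_div_of_nonneg_left hA0.le hlb' hl_lb
    rw [div_div_eq_mul_div] at h3
    calc (1 - γ) * (A / l) ≤ (1 - γ) * (A * (1 - γ * (1 - ε) * x) / (1 - γ)) := by
          apply mul_le_mul_of_nonneg_left h3 hγ'.le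
      _ = A * (1 - γ * (1 - ε) * x) := by field_simp
  -- lower bound for P
  have hPlb : A * (γ * (1 - (1 - ε) * x)) ≤ (1 - γ) * (A / l) := by
    have hub' : 0 < (1 - γ) / (γ * (1 - (1 - ε) * x)) := div_pos hγ' hNγ
    have h3 : A / ((1 - γ) / (γ * (1 - (1 - ε) * x))) ≤ A / l :=
      div_le_div_of_nonneg_left hA0.le hl0 hl_ub
    rw [div_div_eq_mul_div] at h3
    calc A * (γ * (1 - (1 - ε) * x))
        = (1 - γ) * (A * (γ * (1 - (1 - ε) * x)) / (1 - γ)) := by field_simp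
      _ ≤ (1 - γ) * (A / l) := mul_le_mul_of_nonneg_left h3 hγ'.le
  have hφ : (1 - x) * Real.log (1 - x) = -(A * (1 - x)) := by rw [hA]; ring
  have hc1 : γ * (1 - ε) < 1 := by nlinarith
  have key_lb : A * (γ * (1 - (1 - ε) * x)) - A * (1 - x) ≥ -(A * ((1 - γ) + ε)) := by
    nlinarith [mul_nonneg (mul_nonneg hA0.le hx0.le) (sub_nonneg.mpr hc1.le),
      mul_pos hA0 hε0]
  have key_ub : A * (1 - γ * (1 - ε) * x) - A * (1 - x) ≤ A * ((1 - γ) + ε) := by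
    nlinarith [mul_nonneg (mul_nonneg hA0.le (by linarith : (0:ℝ) ≤ 1 - x))
        (by nlinarith : (0:ℝ) ≤ (1 - γ) + γ * ε),
      mul_nonneg (mul_nonneg hA0.le hε0.le) (by linarith : (0:ℝ) ≤ 1 - γ)]
  rw [hφ]
  clear_value l A
  rw [abs_le]
  constructor
  · linarith
  · linarith


lemma key {a b : ℝ} (ha : 0 < a) (hab : a < b) (hb1 : b < 1)
    (hne : (1 - a) * Real.log (1 - a) ≠ (1 - b) * Real.log (1 - b)) :
    ∃ γbar ∈ Set.Ioo (0:ℝ) 1, ∃ εbar ∈ Set.Ioo (0:ℝ) 1,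
      ∀ γ ∈ Set.Ioo γbar 1, ∀ ε ∈ Set.Ioo (0:ℝ) εbar,
        ∃ x ∈ Set.Icc a b, ∃ K : ℕ, x = 1 - (betaFn γ ε x) ^ K := by
  have haI : a ∈ Set.Ioo (0:ℝ) 1 := ⟨ha, lt_trans hab hb1⟩
  have hbI : b ∈ Set.Ioo (0:ℝ) 1 := ⟨lt_trans ha hab, hb1⟩
  set M : ℝ := -Real.log (1 - b) with hMdef
  have hM : 0 < M := by
    rw [hMdef, neg_pos]
    exact Real.log_neg (by linarith) (by linarith)
  set η : ℝ := |(1 - a) * Real.log (1 - a) - (1 - b) * Real.log (1 - b)| with hηdef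
  have hη : 0 < η := abs_pos.mpr (sub_ne_zero.mpr hne)
  refine ⟨max (1/2) (1 - min (η/2) (η/(8*M))), ?_, min (1/2) (η/(8*M)), ?_, ?_⟩
  · constructor
    · exact lt_of_lt_of_le (by norm_num) (le_max_left _ _)
    · apply max_lt (by norm_num)
      have : 0 < min (η/2) (η/(8*M)) := lt_min (by positivity) (by positivity)
      linarith
  · constructor
    · exact lt_min (by norm_num) (by positivity)
    · exact lt_of_le_of_lt (min_le_left _ _) (by norm_num)
  intro γ hγ ε hε
  have hγI : γ ∈ Set.Ioo (0:ℝ) 1 :=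
    ⟨lt_of_lt_of_le (by norm_num) (le_trans (le_max_left _ _) hγ.1.le), hγ.2⟩
  have hεI : ε ∈ Set.Ioo (0:ℝ) 1 :=
    ⟨hε.1, lt_of_lt_of_le (lt_of_lt_of_le hε.2 (min_le_left _ _)) (by norm_num)⟩
  have h1γ : 1 - γ < min (η/2) (η/(8*M)) := by
    have h' := lt_of_le_of_lt (le_max_right (1/2:ℝ) (1 - min (η/2) (η/(8*M)))) hγ.1
    linarith
  have h1γ2 : 1 - γ < η/2 := lt_of_lt_of_le h1γ (min_le_left _ _)
  have h1γ8 : 1 - γ < η/(8*M) := lt_of_lt_of_le h1γ (min_le_right _ _)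
  have hεs : ε < η/(8*M) := lt_of_lt_of_le hε.2 (min_le_right _ _)
  have hγ1 : γ < 1 := hγ.2
  have hγpos : (0:ℝ) < 1 - γ := by linarith
  set L : ℝ → ℝ := fun x => Real.log (1 - x) / Real.log (betaFn γ ε x) with hLdef
  -- positivity of L on [a,b]
  have hmemI : ∀ x ∈ Set.Icc a b, x ∈ Set.Ioo (0:ℝ) 1 := fun x hx =>
    ⟨lt_of_lt_of_le ha hx.1, lt_of_le_of_lt hx.2 hb1⟩
  have hLpos : ∀ x ∈ Set.Icc a b, 0 < L x := by
    intro x hx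
    obtain ⟨hx0, hx1⟩ := hmemI x hx
    obtain ⟨hD, hN, hβ0, hβ1⟩ := beta_facts hγI hεI ⟨hx0, hx1⟩
    have h1 : Real.log (1 - x) < 0 := Real.log_neg (by linarith) (by linarith)
    have h2 : Real.log (betaFn γ ε x) < 0 := Real.log_neg hβ0 hβ1
    simp only [hLdef]
    rw [← neg_div_neg_eq]
    exact div_pos (by linarith) (by linarith)
  -- bounds |Pa|, |Pb| ≤ η/4
  have hquarter : ∀ x ∈ Set.Icc a b,
      |(1 - γ) * L x + (1 - x) * Real.log (1 - x)| ≤ η/4 := by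
    intro x hx
    refine le_trans (Pbound hγI hεI (hmemI x hx)) ?_
    have hAx : -Real.log (1 - x) ≤ M := by
      rw [hMdef, neg_le_neg_iff]
      apply Real.log_le_log (by obtain ⟨_, h2⟩ := hmemI x hx; linarith)
      linarith [hx.2]
    have hAx0 : 0 < -Real.log (1 - x) := by
      obtain ⟨h1, h2⟩ := hmemI x hx
      rw [neg_pos]; exact Real.log_neg (by linarith) (by linarith)
    have hsum : (1 - γ) + ε ≤ η/(4*M) := by
      have : η/(8*M) + η/(8*M) = η/(4*M) := by ring
      linarith
    calc -Real.log (1 - x) * ((1 - γ) + ε) ≤ M * (η/(4*M)) := by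
          apply mul_le_mul hAx hsum (by linarith [hεI.1] : (0:ℝ) ≤ (1 - γ) + ε) hM.le
      _ = η/4 := by field_simp
  have hPa := hquarter a ⟨le_refl a, hab.le⟩
  have hPb := hquarter b ⟨hab.le, le_refl b⟩
  -- |L b - L a| ≥ 1
  have htri : η ≤ |(1 - γ) * L b - (1 - γ) * L a| + η/4 + η/4 := by
    set Pa := (1 - γ) * L a + (1 - a) * Real.log (1 - a) with hPadef
    set Pb := (1 - γ) * L b + (1 - b) * Real.log (1 - b) with hPbdef
    have e : (1 - a) * Real.log (1 - a) - (1 - b) * Real.log (1 - b)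
        = (((1 - γ) * L b - (1 - γ) * L a) + -Pb) + Pa := by
      rw [hPadef, hPbdef]; ring
    calc η = |(((1 - γ) * L b - (1 - γ) * L a) + -Pb) + Pa| := by rw [hηdef, e]
      _ ≤ |((1 - γ) * L b - (1 - γ) * L a) + -Pb| + |Pa| := abs_add_le _ _
      _ ≤ (|(1 - γ) * L b - (1 - γ) * L a| + |-Pb|) + |Pa| :=
          add_le_add_left (abs_add_le _ _) _
      _ = |(1 - γ) * L b - (1 - γ) * L a| + |Pb| + |Pa| := by rw [abs_neg]
      _ ≤ |(1 - γ) * L b - (1 - γ) * L a| + η/4 + η/4 := by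
          apply add_le_add (add_le_add_right hPb _) hPa
  have hfac : |(1 - γ) * L b - (1 - γ) * L a| = (1 - γ) * |L b - L a| := by
    rw [← mul_sub, abs_mul, abs_of_pos hγpos]
  have hone : (1:ℝ) ≤ |L b - L a| := by
    rcases le_or_gt 1 |L b - L a| with h | h
    · exact h
    · exfalso
      have h5 : (1 - γ) * |L b - L a| < (1 - γ) * 1 :=
        mul_lt_mul_of_pos_left h hγpos
      rw [hfac] at htri
      rw [mul_one] at h5
      linarith
  -- pick K
  have hLa := hLpos a ⟨le_refl a, hab.le⟩
  have hLb := hLpos b ⟨hab.le, le_refl b⟩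
  have hmin0 : 0 ≤ min (L a) (L b) := le_min hLa.le hLb.le
  set K : ℕ := ⌈min (L a) (L b)⌉₊ with hKdef
  have hK1 : min (L a) (L b) ≤ (K:ℝ) := Nat.le_ceil _
  have hK2 : (K:ℝ) ≤ max (L a) (L b) := by
    have h6 : (K:ℝ) < min (L a) (L b) + 1 := Nat.ceil_lt_add_one hmin0
    have h7 : max (L a) (L b) - min (L a) (L b) = |L b - L a| := max_sub_min_eq_abs _ _
    linarith
  -- IVT
  have hcont : ContinuousOn L (Set.uIcc a b) := by
    rw [Set.uIcc_of_le hab.le]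
    have hβcont : ContinuousOn (fun x => betaFn γ ε x) (Set.Icc a b) := by
      simp only [betaFn]
      apply ContinuousOn.div
        ((by fun_prop : Continuous fun x : ℝ => γ * (1 - (1 - ε) * x)).continuousOn)
        ((by fun_prop : Continuous fun x : ℝ => 1 - γ * (1 - ε) * x).continuousOn)
      intro x hx
      obtain ⟨hD, _, _, _⟩ := beta_facts hγI hεI (hmemI x hx)
      exact ne_of_gt hD
    apply ContinuousOn.div
    · apply ContinuousOn.log ((by fun_prop : Continuous fun x : ℝ => 1 - x).continuousOn)
      intro x hx
      obtain ⟨_, h2⟩ := hmemI x hx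
      have : (0:ℝ) < 1 - x := by linarith
      exact ne_of_gt this
    · apply ContinuousOn.log hβcont
      intro x hx
      obtain ⟨_, _, hβ0, _⟩ := beta_facts hγI hεI (hmemI x hx)
      exact ne_of_gt hβ0
    · intro x hx
      obtain ⟨_, _, hβ0, hβ1⟩ := beta_facts hγI hεI (hmemI x hx)
      exact ne_of_lt (Real.log_neg hβ0 hβ1)
  have hKmem : (K:ℝ) ∈ Set.uIcc (L a) (L b) := by
    rcases le_total (L a) (L b) with h | h
    · rw [Set.uIcc_of_le h, Set.mem_Icc]
      rw [min_eq_left h] at hK1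
      rw [max_eq_right h] at hK2
      exact ⟨hK1, hK2⟩
    · rw [Set.uIcc_of_ge h, Set.mem_Icc]
      rw [min_eq_right h] at hK1
      rw [max_eq_left h] at hK2
      exact ⟨hK1, hK2⟩
  obtain ⟨x, hxmem, hLx⟩ := intermediate_value_uIcc hcont hKmem
  rw [Set.uIcc_of_le hab.le] at hxmem
  refine ⟨x, hxmem, K, ?_⟩
  obtain ⟨hx0, hx1⟩ := hmemI x hxmem
  obtain ⟨hD, hN, hβ0, hβ1⟩ := beta_facts hγI hεI ⟨hx0, hx1⟩
  have hlogβ : Real.log (betaFn γ ε x) ≠ 0 := ne_of_lt (Real.log_neg hβ0 hβ1)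
  have heq : Real.log (1 - x) = (K:ℝ) * Real.log (betaFn γ ε x) := by
    have h8 : Real.log (1 - x) / Real.log (betaFn γ ε x) = (K:ℝ) := hLx
    exact (div_eq_iff hlogβ).mp h8
  have h1x : (0:ℝ) < 1 - x := by linarith
  have hpow : (1:ℝ) - x = betaFn γ ε x ^ K := by
    have hlog : Real.log (1 - x) = Real.log (betaFn γ ε x ^ K) := by
      rw [Real.log_pow]; exact heq
    calc (1:ℝ) - x = Real.exp (Real.log (1 - x)) := (Real.exp_log h1x).symm
      _ = Real.exp (Real.log (betaFn γ ε x ^ K)) := by rw [hlog]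
      _ = betaFn γ ε x ^ K := Real.exp_log (pow_pos hβ0 K)
  linarith


theorem stmt_14 (μ : ℝ) (hμ : μ ∈ Set.Ioo (0:ℝ) 1) :
    ∀ Δ > (0:ℝ), ∃ γbar ∈ Set.Ioo (0:ℝ) 1, ∃ εbar ∈ Set.Ioo (0:ℝ) 1,
      ∀ γ ∈ Set.Ioo γbar 1, ∀ ε ∈ Set.Ioo (0:ℝ) εbar,
        ∃ μhat ∈ Set.Ioo (0:ℝ) 1, ∃ K : ℕ,
          μhat = 1 - (betaFn γ ε μhat) ^ K ∧ |μhat - μ| < Δ := by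
  intro Δ hΔ
  obtain ⟨hμ0, hμ1⟩ := hμ
  set δ : ℝ := min Δ (min μ (1 - μ)) / 2 with hδdef
  have hδ0 : 0 < δ := by
    apply div_pos _ (by norm_num)
    exact lt_min hΔ (lt_min hμ0 (by linarith))
  have hδΔ : δ < Δ := by
    have h1 : min Δ (min μ (1 - μ)) ≤ Δ := min_le_left _ _
    rw [hδdef]; linarith
  have hδμ : δ < μ := by
    have h1 : min Δ (min μ (1 - μ)) ≤ μ := le_trans (min_le_right _ _) (min_le_left _ _)
    rw [hδdef]; linarith
  have hδμ1 : δ < 1 - μ := by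
    have h1 : min Δ (min μ (1 - μ)) ≤ 1 - μ := le_trans (min_le_right _ _) (min_le_right _ _)
    rw [hδdef]; linarith
  -- choose a, b near μ with (1-a)log(1-a) ≠ (1-b)log(1-b)
  obtain ⟨aa, bb, haa, habb, hbb1, hwin, hne⟩ :
      ∃ aa bb : ℝ, 0 < aa ∧ aa < bb ∧ bb < 1 ∧
        (∀ x ∈ Set.Icc aa bb, |x - μ| ≤ δ) ∧
        (1 - aa) * Real.log (1 - aa) ≠ (1 - bb) * Real.log (1 - bb) := by
    rcases le_or_gt μ (1 - Real.exp (-1)) with hcase | hcase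
    · refine ⟨μ - δ, μ - δ/2, by linarith, by linarith, by linarith, ?_, ?_⟩
      · intro x hx
        rw [abs_le]
        constructor
        · linarith [hx.1]
        · linarith [hx.2]
      · have h := mul_log_lt_right (s := 1 - (μ - δ/2)) (t := 1 - (μ - δ))
          (by linarith) (by linarith)
        exact ne_of_gt h
    · refine ⟨μ + δ/2, μ + δ, by linarith, by linarith, by linarith, ?_, ?_⟩
      · intro x hx
        rw [abs_le]
        constructor
        · linarith [hx.1]
        · linarith [hx.2]
      · have h := mul_log_lt_left (s := 1 - (μ + δ)) (t := 1 - (μ + δ/2))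
          (by linarith) (by linarith) (by linarith)
        exact ne_of_lt h
  obtain ⟨γbar, hγbar, εbar, hεbar, hmain⟩ := key haa habb hbb1 hne
  refine ⟨γbar, hγbar, εbar, hεbar, ?_⟩
  intro γ hγ ε hε
  obtain ⟨x, hxmem, K, hxeq⟩ := hmain γ hγ ε hε
  refine ⟨x, ⟨lt_of_lt_of_le haa hxmem.1, lt_of_le_of_lt hxmem.2 hbb1⟩, K, hxeq, ?_⟩
  exact lt_of_le_of_lt (hwin x hxmem) hδΔ
end

section
/- Fix an integer K ≥ 1 and γ, ε ∈ (0,1), and let F and D be as defined. If x, x̃ ∈ D satisfy x̃_k ≤ x_k for all k < K, then F(x̃)_k ≤ F(x)_k for all k < K. Moreover, F maps D into D. -/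
/-- The set of monotone cumulative record distributions (only indices `< K` matter). -/
def grimD (K : ℕ) : Set (ℕ → ℝ) :=
  {x | 0 ≤ x 0 ∧ (∀ k, k + 1 < K → x k ≤ x (k + 1)) ∧ x (K - 1) ≤ 1}

/-- The GrimK one-period update map on cumulative record distributions. -/
def grimF (K : ℕ) (γ ε : ℝ) (x : ℕ → ℝ) : ℕ → ℝ := fun k =>
  if k = 0 then 1 - γ + γ * (1 - ε) * x (K - 1) * x 0
  else 1 - γ + γ * x (k - 1) + γ * (1 - ε) * x (K - 1) * (x k - x (k - 1))

lemma grimD_mono {K : ℕ} {x : ℕ → ℝ} (hx : x ∈ grimD K) :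
    ∀ j k : ℕ, j ≤ k → k < K → x j ≤ x k := by
  intro j k hjk hk
  induction k with
  | zero => simp_all
  | succ n ih =>
    rcases Nat.lt_or_ge j (n+1) with h | h
    · exact le_trans (ih (by omega) (by omega)) (hx.2.1 n hk)
    · have : j = n + 1 := by omega
      simp [this]

lemma grimD_nonneg {K : ℕ} {x : ℕ → ℝ} (hx : x ∈ grimD K) {k : ℕ} (hk : k < K) :
    0 ≤ x k := le_trans hx.1 (grimD_mono hx 0 k (by omega) hk)

lemma grimD_le_top {K : ℕ} (hK : 1 ≤ K) {x : ℕ → ℝ} (hx : x ∈ grimD K) {k : ℕ} (hk : k < K) :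
    x k ≤ x (K - 1) := grimD_mono hx k (K-1) (by omega) (by omega)

lemma grimD_le_one {K : ℕ} (hK : 1 ≤ K) {x : ℕ → ℝ} (hx : x ∈ grimD K) {k : ℕ} (hk : k < K) :
    x k ≤ 1 := le_trans (grimD_le_top hK hx hk) hx.2.2

theorem stmt_15 (K : ℕ) (hK : 1 ≤ K) (γ ε : ℝ)
    (hγ : γ ∈ Set.Ioo (0:ℝ) 1) (hε : ε ∈ Set.Ioo (0:ℝ) 1) :
    (∀ x ∈ grimD K, ∀ xt ∈ grimD K,
      (∀ k < K, xt k ≤ x k) → ∀ k < K, grimF K γ ε xt k ≤ grimF K γ ε x k) ∧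
    (∀ x ∈ grimD K, grimF K γ ε x ∈ grimD K) := by
  obtain ⟨hγ0, hγ1⟩ := hγ
  obtain ⟨hε0, hε1⟩ := hε
  have hKK : K - 1 < K := by omega
  constructor
  · intro x hx xt hxt hle k hk
    have hT : xt (K-1) ≤ x (K-1) := hle _ hKK
    have hT0 : (0:ℝ) ≤ xt (K-1) := grimD_nonneg hxt hKK
    have hT1 : x (K-1) ≤ 1 := hx.2.2
    rcases Nat.eq_zero_or_pos k with rfl | hkpos
    · simp only [grimF, if_pos rfl, if_true]
      have h0 : (0:ℝ) ≤ xt 0 := hxt.1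
      have h0' : xt 0 ≤ x 0 := hle 0 (by omega)
      have key : xt (K-1) * xt 0 ≤ x (K-1) * x 0 := by
        nlinarith [mul_nonneg (sub_nonneg.2 hT) h0, mul_nonneg (le_trans hT0 hT) (sub_nonneg.2 h0')]
      have hge : (0:ℝ) ≤ γ * (1 - ε) := by nlinarith
      nlinarith [mul_nonneg hge (sub_nonneg.2 key)]
    · have hk0 : k ≠ 0 := by omega
      simp only [grimF, if_neg hk0]
      have hkm : k - 1 < K := by omega
      have h1 : xt (k-1) ≤ x (k-1) := hle _ hkm
      have h2 : xt k ≤ x k := hle _ hk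
      have h3 : xt (k-1) ≤ xt k := grimD_mono hxt (k-1) k (by omega) hk
      have h4 : x (k-1) ≤ x k := grimD_mono hx (k-1) k (by omega) hk
      have ha1 : (1-ε) * x (K-1) ≤ 1 := by nlinarith [grimD_nonneg hx hKK]
      have ha0 : (0:ℝ) ≤ (1-ε) * xt (K-1) := by nlinarith
      have haa : (1-ε) * xt (K-1) ≤ (1-ε) * x (K-1) := by nlinarith
      nlinarith [mul_nonneg (sub_nonneg.2 haa) (sub_nonneg.2 h3),
        mul_nonneg (sub_nonneg.2 ha1) (sub_nonneg.2 h1),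
        mul_nonneg (le_trans ha0 haa) (sub_nonneg.2 h2)]
  · intro x hx
    have hT0 : (0:ℝ) ≤ x (K-1) := grimD_nonneg hx hKK
    have hT1 : x (K-1) ≤ 1 := hx.2.2
    have ha0 : (0:ℝ) ≤ (1-ε) * x (K-1) := by nlinarith
    have ha1 : (1-ε) * x (K-1) ≤ 1 := by nlinarith
    refine ⟨?_, ?_, ?_⟩
    · simp only [grimF, if_pos rfl, if_true]
      nlinarith [mul_nonneg ha0 hx.1]
    · intro k hkK
      rcases Nat.eq_zero_or_pos k with rfl | hkpos
      · simp only [grimF, if_pos rfl, if_true, if_neg (Nat.one_ne_zero)]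
        norm_num
        have h01 : x 0 ≤ x 1 := hx.2.1 0 hkK
        nlinarith [mul_nonneg (sub_nonneg.2 ha1) hx.1,
          mul_nonneg ha0 (sub_nonneg.2 h01)]
      · have hk0 : k ≠ 0 := by omega
        simp only [grimF, if_neg hk0, if_neg (Nat.succ_ne_zero k)]
        have e1 : k + 1 - 1 = k := by omega
        rw [e1]
        have h1 : x (k-1) ≤ x k := grimD_mono hx (k-1) k (by omega) (by omega)
        have h2 : x k ≤ x (k+1) := hx.2.1 k hkK
        nlinarith [mul_nonneg (sub_nonneg.2 ha1) (sub_nonneg.2 h1),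
          mul_nonneg ha0 (sub_nonneg.2 h2)]
    · rcases Nat.lt_or_ge K 2 with h2 | h2
      · have : K = 1 := by omega
        subst this
        simp only [grimF, if_pos rfl, if_true]
        have h1 : x 0 ≤ 1 := hx.2.2
        norm_num
        have key : (1 - ε) * (x 0 * x 0) ≤ 1 := by
          nlinarith [mul_nonneg hx.1 hx.1, mul_nonneg (sub_nonneg.2 h1) hx.1]
        nlinarith [mul_nonneg hγ0.le (sub_nonneg.2 key)]
      · have hKm : K - 1 ≠ 0 := by omega
        simp only [grimF, if_neg hKm]
        have h0 : (0:ℝ) ≤ x (K-1-1) := grimD_nonneg hx (by omega)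
        have h1 : x (K-1-1) ≤ x (K-1) := grimD_mono hx (K-1-1) (K-1) (by omega) hKK
        nlinarith [mul_nonneg (sub_nonneg.2 ha1) (sub_nonneg.2 h1)]
end

section
/- Let n ≥ 2 be an integer, let F > 0 and l > 0 be reals, and let g ∈ ℝ. Suppose μ ∈ (0,1) satisfies (μ^{n-1}·(1-μ)/(1-μ^{n-1}))·F ≥ g and μ^{n-1} ≤ l/(F+l). Then g ≤ (1 - (l/(F+l))^{1/(n-1)})·l. (This is the necessary condition on the parameters for any positive cooperation to be sustainable with generalized GrimK strategies in the n-player public goods game in the limit of long lifespans and vanishing noise.) -/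
lemma geom_aux (m : ℕ) (a : ℝ) : 1 - a ^ m = (1 - a) * ∑ i ∈ Finset.range m, a ^ i := by
  have h := geom_sum_mul a m
  linear_combination h

lemma mono_aux (m : ℕ) (hm : 1 ≤ m) (a b : ℝ) (ha : 0 < a) (hab : a ≤ b) (hb : b < 1) :
    a ^ m * (1 - a) / (1 - a ^ m) ≤ b ^ m * (1 - b) / (1 - b ^ m) := by
  have hb0 : 0 < b := lt_of_lt_of_le ha hab
  have ha1 : a < 1 := lt_of_le_of_lt hab hb
  set Sa := ∑ i ∈ Finset.range m, a ^ i with hSadef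
  set Sb := ∑ i ∈ Finset.range m, b ^ i with hSbdef
  have hSa : 0 < Sa := Finset.sum_pos (fun i _ => pow_pos ha i) (by simp [Finset.nonempty_range_iff]; omega)
  have hSb : 0 < Sb := Finset.sum_pos (fun i _ => pow_pos hb0 i) (by simp [Finset.nonempty_range_iff]; omega)
  have ea : a ^ m * (1 - a) / (1 - a ^ m) = a ^ m / Sa := by
    rw [geom_aux m a, mul_comm (1 - a) (∑ i ∈ Finset.range m, a ^ i),
      mul_div_mul_right _ _ (by linarith : (1:ℝ) - a ≠ 0)]
  have eb : b ^ m * (1 - b) / (1 - b ^ m) = b ^ m / Sb := by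
    rw [geom_aux m b, mul_comm (1 - b) (∑ i ∈ Finset.range m, b ^ i),
      mul_div_mul_right _ _ (by linarith : (1:ℝ) - b ≠ 0)]
  rw [ea, eb, div_le_div_iff₀ hSa hSb]
  rw [hSadef, hSbdef, Finset.mul_sum, Finset.mul_sum]
  apply Finset.sum_le_sum
  intro i hi
  have him : i ≤ m := le_of_lt (Finset.mem_range.mp hi)
  have key : a ^ m * b ^ i = a ^ i * b ^ i * a ^ (m - i) := by
    rw [mul_right_comm, ← pow_add, Nat.add_sub_cancel' him]
  have key2 : b ^ m * a ^ i = a ^ i * b ^ i * b ^ (m - i) := by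
    rw [mul_assoc, ← pow_add, Nat.add_sub_cancel' him, mul_comm]
  rw [key, key2]
  apply mul_le_mul_of_nonneg_left (pow_le_pow_left₀ ha.le hab _)
  positivity

theorem stmt_19 (n : ℕ) (hn : 2 ≤ n) (F l g : ℝ) (hF : 0 < F) (hl : 0 < l)
    (μ : ℝ) (hμ : μ ∈ Set.Ioo (0:ℝ) 1)
    (hICC : (μ ^ (n - 1) * (1 - μ) / (1 - μ ^ (n - 1))) * F ≥ g)
    (hICD : μ ^ (n - 1) ≤ l / (F + l)) :
    g ≤ (1 - (l / (F + l)) ^ ((1:ℝ) / (n - 1))) * l := by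
  obtain ⟨hμ0, hμ1⟩ := hμ
  set m := n - 1 with hm
  have hm1 : 1 ≤ m := by omega
  have hcast : ((m : ℝ)) = (n : ℝ) - 1 := by
    rw [hm]; push_cast [Nat.cast_sub (by omega : 1 ≤ n)]; ring
  set r := l / (F + l) with hr
  have hFl : 0 < F + l := by linarith
  have hr0 : 0 < r := div_pos hl hFl
  have hr1 : r < 1 := by rw [hr, div_lt_one hFl]; linarith
  set μ0 := r ^ ((1:ℝ) / ((n:ℝ) - 1)) with hμ0def
  have hexp : (0:ℝ) < (n:ℝ) - 1 := by
    have : (2:ℝ) ≤ n := by exact_mod_cast hn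
    linarith
  have hμ0pos : 0 < μ0 := Real.rpow_pos_of_pos hr0 _
  have hμ0lt1 : μ0 < 1 := Real.rpow_lt_one hr0.le hr1 (by positivity)
  have hpow : μ0 ^ m = r := by
    rw [hμ0def, ← Real.rpow_natCast (r ^ ((1:ℝ)/((n:ℝ)-1))) m, ← Real.rpow_mul hr0.le]
    rw [hcast]
    rw [one_div_mul_cancel (by linarith : (n:ℝ) - 1 ≠ 0), Real.rpow_one]
  have hμle : μ ≤ μ0 := by
    have h1 : μ ^ m ≤ μ0 ^ m := by rw [hpow]; exact hICD
    exact le_of_pow_le_pow_left₀ (by omega) hμ0pos.le h1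
  have hmono := mono_aux m hm1 μ μ0 hμ0 hμle hμ0lt1
  have hstep : μ ^ m * (1 - μ) / (1 - μ ^ m) * F ≤ μ0 ^ m * (1 - μ0) / (1 - μ0 ^ m) * F :=
    mul_le_mul_of_nonneg_right hmono hF.le
  have hval : μ0 ^ m * (1 - μ0) / (1 - μ0 ^ m) * F = (1 - μ0) * l := by
    rw [hpow, hr]
    have h1r : 1 - l / (F + l) = F / (F + l) := by field_simp; ring
    rw [h1r]
    field_simp
  calc g ≤ μ ^ m * (1 - μ) / (1 - μ ^ m) * F := hICC
    _ ≤ μ0 ^ m * (1 - μ0) / (1 - μ0 ^ m) * F := hstep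
    _ = (1 - μ0) * l := hval
end
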